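/- arXiv:1110.3802 — 5 statements merged into one kernel-verified Lean document; each statement's English description precedes it below -/
import Mathlib

section
/- Let f be an eigenvector of H(G) with eigenvalue λ, let (i,j) be an edge of G with f_i ≠ 0 and f_j ≠ 0, and let G' = G − (i,j) be the factor obtained by deleting this edge. Then f is an eigenvector, with the same eigenvalue λ, of the Hamiltonian H(G') = −A(G') + Q̃, where Q̃ agrees with Q on all vertices except that Q̃_{ii} = q_i − f_j/f_i and Q̃_{jj} = q_j − f_i/f_j. Equivalently, with α = f_j/f_i one has B(i,j;α)f = 0 and (H(G) + B(i,j;α))f = λf. -/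
open Matrix

open Classical in
/-- The discrete Schrödinger operator (Hamiltonian) `H(G) = -A(G) + Q` on the graph `G`
with potential `q`, given entrywise: `q a` on the diagonal, `-1` on adjacent pairs of
vertices, and `0` otherwise. -/
noncomputable def Ham {V : ℕ} (G : SimpleGraph (Fin V)) (q : Fin V → ℝ) :
    Matrix (Fin V) (Fin V) ℝ :=
  Matrix.of fun a b => if a = b then q a else if G.Adj a b then -1 else 0

/-- The perturbation matrix `B(i,j;α)`: its only (potentially) nonzero entries are
`B i i = -α`, `B j j = -1/α` and `B i j = B j i = 1`. -/
noncomputable def Bmat {V : ℕ} (i j : Fin V) (α : ℝ) : Matrix (Fin V) (Fin V) ℝ :=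
  Matrix.of fun a b =>
    (if a = i ∧ b = i then -α else 0) + (if a = j ∧ b = j then -1/α else 0) +
      (if (a = i ∧ b = j) ∨ (a = j ∧ b = i) then 1 else 0)

/-- `B(i,j;α) f = 0` when `α = f j / f i`. -/
private lemma Bmat_mulVec_eq_zero {V : ℕ} (i j : Fin V) (hne : i ≠ j) (f : Fin V → ℝ)
    (hfi : f i ≠ 0) (hfj : f j ≠ 0) : Bmat i j (f j / f i) *ᵥ f = 0 := by
  ext a
  simp only [Bmat, mulVec, dotProduct, of_apply, add_mul, ite_mul, zero_mul, one_mul,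
    Finset.sum_add_distrib]
  by_cases hai : a = i <;> by_cases haj : a = j <;>
    simp_all [Finset.sum_ite_eq', hne, Ne.symm hne, div_mul_cancel₀, one_div,
      div_eq_iff, mul_comm] <;> field_simp <;> ring

/-- Deleting the edge `(i,j)` and modifying the potential at `i` and `j` amounts to
adding the perturbation `B(i,j; f j / f i)` to the Hamiltonian. -/
private lemma Ham_delete_eq {V : ℕ} (G : SimpleGraph (Fin V)) (q : Fin V → ℝ) (f : Fin V → ℝ)
    (i j : Fin V) (hij : G.Adj i j) (hfi : f i ≠ 0) (hfj : f j ≠ 0) :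
    Ham (G.deleteEdges {s(i, j)})
        (Function.update (Function.update q i (q i - f j / f i)) j (q j - f i / f j))
      = Ham G q + Bmat i j (f j / f i) := by
  have hne : i ≠ j := G.ne_of_adj hij
  ext a b
  have hdel : (G.deleteEdges {s(i, j)}).Adj a b ↔
      G.Adj a b ∧ ¬((a = i ∧ b = j) ∨ (a = j ∧ b = i)) := by
    simp [Sym2.eq_iff]
  have hne' := fun (h : G.Adj a b) => G.ne_of_adj h
  simp only [Ham, Bmat, of_apply, Matrix.add_apply, Function.update_apply, hdel]
  split_ifs <;> first
    | rfl
    | (exfalso; simp_all [hij.symm]; done)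
    | (exfalso; casesm* _ ∨ _, _ ∧ _ <;> subst_vars <;> simp_all [hij.symm]; done)
    | (norm_num; done)
    | (subst_vars; field_simp; ring)
    | (field_simp; ring)
    | (field_simp; done)

/-- If `f` is an eigenvector of `H(G)` with eigenvalue `λ`, and `(i,j)` is an
edge of `G` with `f i ≠ 0 ≠ f j`, then `f` is an eigenvector with the same eigenvalue of the
Hamiltonian of the factor `G' = G - (i,j)` whose potential is modified at `i` and `j` by
`q i - f j / f i` and `q j - f i / f j`; equivalently, with `α = f j / f i`,
`B(i,j;α) f = 0` and `(H(G) + B(i,j;α)) f = λ f`. -/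
theorem stmt_0 {V : ℕ} (G : SimpleGraph (Fin V)) (hG : G.Connected) (q : Fin V → ℝ)
    (f : Fin V → ℝ) (lam : ℝ) (hf : f ≠ 0) (heig : Ham G q *ᵥ f = lam • f)
    (i j : Fin V) (hij : G.Adj i j) (hfi : f i ≠ 0) (hfj : f j ≠ 0) :
    Ham (G.deleteEdges {s(i, j)})
        (Function.update (Function.update q i (q i - f j / f i)) j (q j - f i / f j)) *ᵥ f
      = lam • f ∧
    Bmat i j (f j / f i) *ᵥ f = 0 ∧
    (Ham G q + Bmat i j (f j / f i)) *ᵥ f = lam • f := by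
  have hB : Bmat i j (f j / f i) *ᵥ f = 0 :=
    Bmat_mulVec_eq_zero i j (G.ne_of_adj hij) f hfi hfj
  have hsum : (Ham G q + Bmat i j (f j / f i)) *ᵥ f = lam • f := by
    rw [add_mulVec, hB, heig, add_zero]
  exact ⟨by rw [Ham_delete_eq G q f i j hij hfi hfj]; exact hsum, hB, hsum⟩
end

section
/- Let (i,j) be an edge of G and denote by λ_m(G';α) the m-th eigenvalue of H(G';α) = H(G) + B(i,j;α). For every α > 0: λ_{m−1}(G) ≤ λ_m(G';α) ≤ λ_m(G) for all m ≥ 2, and λ_1(G';α) ≤ λ_1(G). For every α < 0: λ_m(G) ≤ λ_m(G';α) ≤ λ_{m+1}(G) for all m ≤ V−1, and λ_V(G) ≤ λ_V(G';α). -/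
open Matrix

lemma Ham_isHermitian {V : ℕ} (G : SimpleGraph (Fin V)) (q : Fin V → ℝ) :
    (Ham G q).IsHermitian := by
  classical
  unfold Matrix.IsHermitian
  ext a b
  simp only [Matrix.conjTranspose_apply, Ham, Matrix.of_apply, star_trivial]
  by_cases h : a = b
  · subst h; simp
  · simp [h, Ne.symm h, SimpleGraph.adj_comm]

lemma Bmat_isHermitian {V : ℕ} (i j : Fin V) (α : ℝ) : (Bmat i j α).IsHermitian := by
  unfold Matrix.IsHermitian
  ext a b
  simp only [Matrix.conjTranspose_apply, Bmat, Matrix.of_apply, star_trivial]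
  by_cases hai : a = i <;> by_cases haj : a = j <;> by_cases hbi : b = i <;>
    by_cases hbj : b = j <;> simp [hai, haj, hbi, hbj]

/-- The eigenvalues of a Hermitian matrix, sorted in nondecreasing order and
counted with multiplicity; `sortedEigs hM k` is the `(k+1)`-st smallest eigenvalue. -/
noncomputable def sortedEigs {n : ℕ} {M : Matrix (Fin n) (Fin n) ℝ} (hM : M.IsHermitian) :
    Fin n → ℝ :=
  hM.eigenvalues ∘ Tuple.sort hM.eigenvalues

section AuxInterlacing

open Module Submodule RealInnerProductSpace

variable {n : ℕ}

local notation "Euc" => EuclideanSpace ℝ (Fin n)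

private lemma quad_le (b : OrthonormalBasis (Fin n) ℝ Euc) (T : Euc →ₗ[ℝ] Euc)
    (hT : LinearMap.IsSymmetric T) (μ : Fin n → ℝ) (hb : ∀ k, T (b k) = μ k • b k)
    (S : Set (Fin n)) (c : ℝ) (hc : ∀ k ∈ S, μ k ≤ c)
    (x : Euc) (hx : x ∈ Submodule.span ℝ (b '' S)) :
    ⟪x, T x⟫ ≤ c * ⟪x, x⟫ := by
  have h0 : ∀ k, k ∉ S → ⟪b k, x⟫ = 0 := by
    intro k hk
    have hle : Submodule.span ℝ (b '' S) ≤ LinearMap.ker ((innerSL ℝ (b k)).toLinearMap) := by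
      rw [Submodule.span_le]
      rintro y ⟨l, hl, rfl⟩
      simp only [SetLike.mem_coe, LinearMap.mem_ker, ContinuousLinearMap.coe_coe, innerSL_apply_apply]
      exact b.orthonormal.2 (fun h => hk (h ▸ hl))
    simpa using hle hx
  have key : ∀ k, ⟪x, b k⟫ * ⟪b k, T x⟫ = μ k * (⟪b k, x⟫)^2 := by
    intro k
    rw [← hT (b k) x, hb k, inner_smul_left, real_inner_comm x (b k)]
    simp only [starRingEnd_apply, star_trivial]
    ring
  calc ⟪x, T x⟫ = ∑ k, ⟪x, b k⟫ * ⟪b k, T x⟫ := (b.sum_inner_mul_inner x (T x)).symm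
    _ = ∑ k, μ k * (⟪b k, x⟫)^2 := by simp_rw [key]
    _ ≤ ∑ k, c * (⟪b k, x⟫)^2 := by
        apply Finset.sum_le_sum
        intro k _
        by_cases hk : k ∈ S
        · exact mul_le_mul_of_nonneg_right (hc k hk) (sq_nonneg _)
        · rw [h0 k hk]; simp
    _ = c * ∑ k, ⟪x, b k⟫ * ⟪b k, x⟫ := by
        rw [Finset.mul_sum]
        congr 1; ext k
        rw [real_inner_comm x (b k)]; ring
    _ = c * ⟪x, x⟫ := by rw [b.sum_inner_mul_inner x x]

private lemma quad_ge (b : OrthonormalBasis (Fin n) ℝ Euc) (T : Euc →ₗ[ℝ] Euc)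
    (hT : LinearMap.IsSymmetric T) (μ : Fin n → ℝ) (hb : ∀ k, T (b k) = μ k • b k)
    (S : Set (Fin n)) (c : ℝ) (hc : ∀ k ∈ S, c ≤ μ k)
    (x : Euc) (hx : x ∈ Submodule.span ℝ (b '' S)) :
    c * ⟪x, x⟫ ≤ ⟪x, T x⟫ := by
  have := quad_le b (-T) (by intro u v; simp [hT u v]) (-μ)
    (by intro k; simp [hb k, neg_smul]) S (-c) (fun k hk => neg_le_neg (hc k hk)) x hx
  simp only [LinearMap.neg_apply, inner_neg_right, neg_mul] at this
  linarith

private lemma finrank_span_image (b : OrthonormalBasis (Fin n) ℝ Euc) (S : Finset (Fin n)) :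
    finrank ℝ (Submodule.span ℝ (b '' (S : Set (Fin n)))) = S.card := by
  have h1 : (b '' (S : Set (Fin n)))
      = Set.range (⇑b ∘ (fun k : (S : Set (Fin n)) => (k : Fin n))) := by
    rw [Set.range_comp, Subtype.range_coe]
  rw [h1, finrank_span_eq_card
    ((b.orthonormal.linearIndependent).comp _ Subtype.coe_injective)]
  simp

private lemma exists_ne_zero_mem_inf (U W : Submodule ℝ Euc)
    (h : n < finrank ℝ U + finrank ℝ W) :
    ∃ x : Euc, x ∈ U ∧ x ∈ W ∧ x ≠ 0 := by
  have hsum := Submodule.finrank_sup_add_finrank_inf_eq U W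
  have hle : finrank ℝ ↥(U ⊔ W) ≤ n := by
    simpa [finrank_euclideanSpace_fin] using Submodule.finrank_le (U ⊔ W)
  have hpos : 0 < finrank ℝ ↥(U ⊓ W) := by omega
  obtain ⟨⟨x, hxUW⟩, hx0⟩ := Module.finrank_pos_iff_exists_ne_zero.mp hpos
  exact ⟨x, hxUW.1, hxUW.2, fun h => hx0 (by simpa using h)⟩

noncomputable def sortedBasis {M : Matrix (Fin n) (Fin n) ℝ} (hM : M.IsHermitian) :
    OrthonormalBasis (Fin n) ℝ Euc :=
  hM.eigenvectorBasis.reindex (Tuple.sort hM.eigenvalues).symm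

private lemma sortedEigs_monotone {M : Matrix (Fin n) (Fin n) ℝ} (hM : M.IsHermitian) :
    Monotone (sortedEigs hM) :=
  Tuple.monotone_sort hM.eigenvalues

private lemma T_sortedBasis {M : Matrix (Fin n) (Fin n) ℝ} (hM : M.IsHermitian) (k : Fin n) :
    Matrix.toEuclideanLin M (sortedBasis hM k) = sortedEigs hM k • sortedBasis hM k := by
  have h := hM.mulVec_eigenvectorBasis (Tuple.sort hM.eigenvalues k)
  have := congrArg (WithLp.equiv 2 (Fin n → ℝ)).symm h
  simpa [sortedBasis, sortedEigs, Matrix.toEuclideanLin_apply, Function.comp,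
    OrthonormalBasis.reindex_apply] using this

private lemma finrank_ker_ge (φ : Euc →ₗ[ℝ] ℝ) : n - 1 ≤ finrank ℝ (LinearMap.ker φ) := by
  have h1 := LinearMap.finrank_range_add_finrank_ker φ
  have h2 : finrank ℝ (LinearMap.range φ) ≤ 1 := by
    simpa using Submodule.finrank_le (LinearMap.range φ)
  rw [finrank_euclideanSpace_fin] at h1
  omega

private lemma finrank_inf_ge (U W : Submodule ℝ Euc) :
    finrank ℝ U + finrank ℝ W - n ≤ finrank ℝ ↥(U ⊓ W) := by
  have hsum := Submodule.finrank_sup_add_finrank_inf_eq U W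
  have hle : finrank ℝ ↥(U ⊔ W) ≤ n := by
    simpa [finrank_euclideanSpace_fin] using Submodule.finrank_le (U ⊔ W)
  omega

private lemma eig_mono {M N : Matrix (Fin n) (Fin n) ℝ} (hM : M.IsHermitian)
    (hN : N.IsHermitian)
    (h : ∀ x : Euc, ⟪x, Matrix.toEuclideanLin N x⟫ ≤ ⟪x, Matrix.toEuclideanLin M x⟫)
    (m : Fin n) : sortedEigs hN m ≤ sortedEigs hM m := by
  have hmn := m.is_lt
  obtain ⟨x, hxU, hxW, hx0⟩ := exists_ne_zero_mem_inf
    (Submodule.span ℝ (sortedBasis hM '' ((Finset.Iic m : Finset (Fin n)) : Set (Fin n))))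
    (Submodule.span ℝ (sortedBasis hN '' ((Finset.Ici m : Finset (Fin n)) : Set (Fin n))))
    (by rw [finrank_span_image, finrank_span_image, Fin.card_Iic, Fin.card_Ici]; omega)
  have h1 := quad_le (sortedBasis hM) (Matrix.toEuclideanLin M)
    ((Matrix.isHermitian_iff_isSymmetric).mp hM) (sortedEigs hM) (T_sortedBasis hM)
    _ (sortedEigs hM m)
    (fun k hk => sortedEigs_monotone hM (Finset.mem_Iic.mp (Finset.mem_coe.mp hk))) x hxU
  have h2 := quad_ge (sortedBasis hN) (Matrix.toEuclideanLin N)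
    ((Matrix.isHermitian_iff_isSymmetric).mp hN) (sortedEigs hN) (T_sortedBasis hN)
    _ (sortedEigs hN m)
    (fun k hk => sortedEigs_monotone hN (Finset.mem_Ici.mp (Finset.mem_coe.mp hk))) x hxW
  have hip : 0 < ⟪x, x⟫ :=
    lt_of_le_of_ne real_inner_self_nonneg (Ne.symm (inner_self_ne_zero.mpr hx0))
  have := h x
  exact (mul_le_mul_iff_of_pos_right hip).mp (by linarith)

private lemma eig_sep {M N : Matrix (Fin n) (Fin n) ℝ} (hM : M.IsHermitian)
    (hN : N.IsHermitian) (φ : Euc →ₗ[ℝ] ℝ)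
    (h : ∀ x : Euc, φ x = 0 →
      ⟪x, Matrix.toEuclideanLin M x⟫ = ⟪x, Matrix.toEuclideanLin N x⟫)
    (p m : Fin n) (hpm : (p : ℕ) + 1 = (m : ℕ)) :
    sortedEigs hM p ≤ sortedEigs hN m := by
  have hmn := m.is_lt
  set U := Submodule.span ℝ
    (sortedBasis hN '' ((Finset.Iic m : Finset (Fin n)) : Set (Fin n)))
  set W := Submodule.span ℝ
    (sortedBasis hM '' ((Finset.Ici p : Finset (Fin n)) : Set (Fin n)))
  have hU : finrank ℝ U = (m : ℕ) + 1 := by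
    rw [finrank_span_image, Fin.card_Iic]
  have hW : finrank ℝ W = n - (p : ℕ) := by
    rw [finrank_span_image, Fin.card_Ici]
  have hUW : 2 ≤ finrank ℝ ↥(U ⊓ W) := by
    have := finrank_inf_ge U W
    omega
  obtain ⟨x, hxUW, hxK, hx0⟩ := exists_ne_zero_mem_inf (U ⊓ W) (LinearMap.ker φ)
    (by have := finrank_ker_ge φ; omega)
  have h1 := quad_ge (sortedBasis hM) (Matrix.toEuclideanLin M)
    ((Matrix.isHermitian_iff_isSymmetric).mp hM) (sortedEigs hM) (T_sortedBasis hM)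
    _ (sortedEigs hM p)
    (fun k hk => sortedEigs_monotone hM (Finset.mem_Ici.mp (Finset.mem_coe.mp hk))) x hxUW.2
  have h2 := quad_le (sortedBasis hN) (Matrix.toEuclideanLin N)
    ((Matrix.isHermitian_iff_isSymmetric).mp hN) (sortedEigs hN) (T_sortedBasis hN)
    _ (sortedEigs hN m)
    (fun k hk => sortedEigs_monotone hN (Finset.mem_Iic.mp (Finset.mem_coe.mp hk))) x hxUW.1
  have heq := h x (LinearMap.mem_ker.mp hxK)
  have hip : 0 < ⟪x, x⟫ :=
    lt_of_le_of_ne real_inner_self_nonneg (Ne.symm (inner_self_ne_zero.mpr hx0))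
  exact (mul_le_mul_iff_of_pos_right hip).mp (by linarith)

private lemma single_quad (c d : Fin n) (t : ℝ) (x : Fin n → ℝ) :
    x ⬝ᵥ ((Matrix.of fun a b => if a = c ∧ b = d then t else 0) *ᵥ x) = t * x c * x d := by
  have h1 : (Matrix.of fun a b => if a = c ∧ b = d then t else 0) *ᵥ x
      = fun a => if a = c then t * x d else 0 := by
    funext a
    by_cases hac : a = c
    · simp [Matrix.mulVec, dotProduct, hac, ite_and, ite_mul, zero_mul,
        Finset.sum_ite_eq', Finset.mem_univ]
    · simp [Matrix.mulVec, dotProduct, hac, ite_and]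
  rw [h1]
  simp [dotProduct, mul_ite, mul_zero, Finset.sum_ite_eq', Finset.mem_univ]
  ring

private lemma Bmat_eq (i j : Fin n) (α : ℝ) (hij : i ≠ j) :
    Bmat i j α = Matrix.of (fun a b => if a = i ∧ b = i then -α else 0)
      + Matrix.of (fun a b => if a = j ∧ b = j then -1/α else 0)
      + Matrix.of (fun a b => if a = i ∧ b = j then (1:ℝ) else 0)
      + Matrix.of (fun a b => if a = j ∧ b = i then (1:ℝ) else 0) := by
  ext a b
  simp only [Bmat, Matrix.add_apply, Matrix.of_apply]
  by_cases hai : a = i <;> by_cases haj : a = j <;> by_cases hbi : b = i <;>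
    by_cases hbj : b = j <;> simp_all

private lemma Bmat_quad (i j : Fin n) (hij : i ≠ j) (α : ℝ) (hα : α ≠ 0) (x : Fin n → ℝ) :
    x ⬝ᵥ (Bmat i j α *ᵥ x) = -(1/α) * (α * x i - x j)^2 := by
  rw [Bmat_eq i j α hij]
  simp only [Matrix.add_mulVec, dotProduct_add, single_quad]
  field_simp
  ring

private lemma inner_toEuclideanLin (A : Matrix (Fin n) (Fin n) ℝ)
    (x : EuclideanSpace ℝ (Fin n)) :
    ⟪x, Matrix.toEuclideanLin A x⟫ =
      (WithLp.equiv 2 (Fin n → ℝ) x) ⬝ᵥ (A *ᵥ (WithLp.equiv 2 (Fin n → ℝ) x)) := by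
  simp [Matrix.toEuclideanLin_apply, PiLp.inner_apply, dotProduct, mul_comm]

/-- The linear functional `x ↦ α * x i - x j`. -/
noncomputable def phiMap (i j : Fin n) (α : ℝ) : EuclideanSpace ℝ (Fin n) →ₗ[ℝ] ℝ where
  toFun x := α * x i - x j
  map_add' x y := by simp [PiLp.add_apply]; ring
  map_smul' c x := by simp [PiLp.smul_apply]; ring

end AuxInterlacing

section AuxInterlacing2

open Module Submodule RealInnerProductSpace

variable {n : ℕ}

private lemma quad_add_B {i j : Fin n} (hij : i ≠ j) {α : ℝ} (hα : α ≠ 0)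
    (H : Matrix (Fin n) (Fin n) ℝ) (x : EuclideanSpace ℝ (Fin n)) :
    ⟪x, Matrix.toEuclideanLin (H + Bmat i j α) x⟫
      = ⟪x, Matrix.toEuclideanLin H x⟫
        + (-(1/α) * (α * (WithLp.equiv 2 (Fin n → ℝ) x) i
            - (WithLp.equiv 2 (Fin n → ℝ) x) j)^2) := by
  rw [inner_toEuclideanLin, inner_toEuclideanLin, Matrix.add_mulVec, dotProduct_add,
    Bmat_quad i j hij α hα]

private lemma interlace_pos_upper {H : Matrix (Fin n) (Fin n) ℝ} (hH : H.IsHermitian)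
    {i j : Fin n} (hij : i ≠ j) {α : ℝ} (hα : 0 < α)
    (hHB : (H + Bmat i j α).IsHermitian) (m : Fin n) :
    sortedEigs hHB m ≤ sortedEigs hH m := by
  apply eig_mono hH hHB (fun x => ?_) m
  rw [quad_add_B hij (ne_of_gt hα) H x]
  nlinarith [sq_nonneg (α * (WithLp.equiv 2 (Fin n → ℝ) x) i
    - (WithLp.equiv 2 (Fin n → ℝ) x) j), one_div_pos.mpr hα]

private lemma interlace_pos_lower {H : Matrix (Fin n) (Fin n) ℝ} (hH : H.IsHermitian)
    {i j : Fin n} (hij : i ≠ j) {α : ℝ} (hα : 0 < α)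
    (hHB : (H + Bmat i j α).IsHermitian) (p m : Fin n) (hpm : (p : ℕ) + 1 = (m : ℕ)) :
    sortedEigs hH p ≤ sortedEigs hHB m := by
  apply eig_sep hH hHB (phiMap i j α) (fun x hx => ?_) p m hpm
  rw [quad_add_B hij (ne_of_gt hα) H x]
  have hs : α * (WithLp.equiv 2 (Fin n → ℝ) x) i - (WithLp.equiv 2 (Fin n → ℝ) x) j = 0 := hx
  rw [hs]
  ring

private lemma interlace_neg_lower {H : Matrix (Fin n) (Fin n) ℝ} (hH : H.IsHermitian)
    {i j : Fin n} (hij : i ≠ j) {α : ℝ} (hα : α < 0)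
    (hHB : (H + Bmat i j α).IsHermitian) (m : Fin n) :
    sortedEigs hH m ≤ sortedEigs hHB m := by
  apply eig_mono hHB hH (fun x => ?_) m
  rw [quad_add_B hij (ne_of_lt hα) H x]
  nlinarith [sq_nonneg (α * (WithLp.equiv 2 (Fin n → ℝ) x) i
    - (WithLp.equiv 2 (Fin n → ℝ) x) j), one_div_neg.mpr hα]

private lemma interlace_neg_upper {H : Matrix (Fin n) (Fin n) ℝ} (hH : H.IsHermitian)
    {i j : Fin n} (hij : i ≠ j) {α : ℝ} (hα : α < 0)
    (hHB : (H + Bmat i j α).IsHermitian) (p m : Fin n) (hpm : (p : ℕ) + 1 = (m : ℕ)) :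
    sortedEigs hHB p ≤ sortedEigs hH m := by
  apply eig_sep hHB hH (phiMap i j α) (fun x hx => ?_) p m hpm
  rw [quad_add_B hij (ne_of_lt hα) H x]
  have hs : α * (WithLp.equiv 2 (Fin n → ℝ) x) i - (WithLp.equiv 2 (Fin n → ℝ) x) j = 0 := hx
  rw [hs]
  ring

end AuxInterlacing2

/-- **interlacing.** For the edge `(i,j)` of `G` and `H(G';α) = H(G) + B(i,j;α)`:
for `α > 0` one has `λ_{m-1}(G) ≤ λ_m(G';α) ≤ λ_m(G)` (for `m ≥ 2`) and
`λ_1(G';α) ≤ λ_1(G)`; for `α < 0` one has `λ_m(G) ≤ λ_m(G';α) ≤ λ_{m+1}(G)` (for `m ≤ V-1`)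
and `λ_V(G) ≤ λ_V(G';α)`.  (Eigenvalue positions are indexed from `0` here.) -/
theorem stmt_5 {V : ℕ} (G : SimpleGraph (Fin V)) (hG : G.Connected) (q : Fin V → ℝ)
    (i j : Fin V) (hij : G.Adj i j) (α : ℝ) :
    (0 < α →
      (∀ m : Fin V,
        sortedEigs ((Ham_isHermitian G q).add (Bmat_isHermitian i j α)) m
          ≤ sortedEigs (Ham_isHermitian G q) m) ∧
      (∀ m : Fin V, 0 < (m : ℕ) →
        sortedEigs (Ham_isHermitian G q) ⟨(m : ℕ) - 1, lt_of_le_of_lt (Nat.sub_le _ 1) m.isLt⟩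
          ≤ sortedEigs ((Ham_isHermitian G q).add (Bmat_isHermitian i j α)) m)) ∧
    (α < 0 →
      (∀ m : Fin V,
        sortedEigs (Ham_isHermitian G q) m
          ≤ sortedEigs ((Ham_isHermitian G q).add (Bmat_isHermitian i j α)) m) ∧
      (∀ m : Fin V, ∀ h : (m : ℕ) + 1 < V,
        sortedEigs ((Ham_isHermitian G q).add (Bmat_isHermitian i j α)) m
          ≤ sortedEigs (Ham_isHermitian G q) ⟨(m : ℕ) + 1, h⟩)) := by
  have hne : i ≠ j := hij.ne
  refine ⟨fun hα => ⟨fun m => ?_, fun m hm => ?_⟩, fun hα => ⟨fun m => ?_, fun m h => ?_⟩⟩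
  · exact interlace_pos_upper (Ham_isHermitian G q) hne hα _ m
  · exact interlace_pos_lower (Ham_isHermitian G q) hne hα _ _ m (by simp; omega)
  · exact interlace_neg_lower (Ham_isHermitian G q) hne hα _ m
  · exact interlace_neg_upper (Ham_isHermitian G q) hne hα _ m ⟨(m : ℕ) + 1, h⟩ (by simp)
end

section
/- Let G' be a connected factor of G obtained by deleting a set S of k ≤ β(G) edges, and let f^{(n)} be a non-degenerate eigenvector of H(G) corresponding to λ_n(G). For each e = (i,j) ∈ S with i < j set α^c_e = f^{(n)}_j / f^{(n)}_i, and define H(G';α^c) = H(G) + Σ_{e∈S} B(e;α^c_e). Then f^{(n)} is an eigenvector of H(G';α^c) with eigenvalue λ_n(G), and if this eigenvalue occupies position m in the nondecreasing spectrum of H(G';α^c), then |n − m| ≤ k. -/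
open Matrix

lemma sum_Bmat_isHermitian {V : ℕ} (S : Finset (Fin V × Fin V)) (α : Fin V × Fin V → ℝ) :
    (∑ p ∈ S, Bmat p.1 p.2 (α p)).IsHermitian := by
  unfold Matrix.IsHermitian
  rw [Matrix.conjTranspose_sum]
  exact Finset.sum_congr rfl fun p _ => Bmat_isHermitian p.1 p.2 (α p)

/-- The first Betti number `β(G) = E - V + 1` of the graph `G` (as an integer). -/
noncomputable def betti {V : ℕ} (G : SimpleGraph (Fin V)) : ℤ :=
  (G.edgeSet.ncard : ℤ) - V + 1

namespace Stmt9Aux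


variable {V : ℕ}

/-- dot product with a fixed vector as a linear map -/
noncomputable def dotL (v : Fin V → ℝ) : (Fin V → ℝ) →ₗ[ℝ] ℝ where
  toFun x := v ⬝ᵥ x
  map_add' x y := by simp [dotProduct_add]
  map_smul' a x := by simp [dotProduct_smul]

@[simp] lemma dotL_apply (v x : Fin V → ℝ) : dotL v x = v ⬝ᵥ x := rfl

lemma dot_sum {ι : Type*} (v : Fin V → ℝ) (s : Finset ι) (g : ι → Fin V → ℝ) :
    v ⬝ᵥ (∑ i ∈ s, g i) = ∑ i ∈ s, v ⬝ᵥ g i :=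
  map_sum (dotL v) g s

lemma sum_dot {ι : Type*} (v : Fin V → ℝ) (s : Finset ι) (g : ι → Fin V → ℝ) :
    (∑ i ∈ s, g i) ⬝ᵥ v = ∑ i ∈ s, g i ⬝ᵥ v := by
  rw [dotProduct_comm, dot_sum]
  exact Finset.sum_congr rfl fun i _ => dotProduct_comm _ _

lemma sum_mulVec {ι : Type*} (s : Finset ι) (A : ι → Matrix (Fin V) (Fin V) ℝ)
    (x : Fin V → ℝ) : (∑ p ∈ s, A p) *ᵥ x = ∑ p ∈ s, A p *ᵥ x := by
  ext a
  simp only [mulVec, dotProduct, Finset.sum_apply, Finset.sum_mul]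
  rw [Finset.sum_comm]
  exact Finset.sum_congr rfl fun b _ => by rw [Matrix.sum_apply, Finset.sum_mul]

/-- the eigenvectors of a Hermitian matrix, as plain vectors -/
noncomputable def ev {M : Matrix (Fin V) (Fin V) ℝ} (hM : M.IsHermitian) (i : Fin V) :
    Fin V → ℝ := ⇑(hM.eigenvectorBasis i)

lemma ev_dot {M : Matrix (Fin V) (Fin V) ℝ} (hM : M.IsHermitian) (i j : Fin V) :
    ev hM i ⬝ᵥ ev hM j = if i = j then 1 else 0 := by
  have h := (orthonormal_iff_ite.mp hM.eigenvectorBasis.orthonormal) i j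
  rw [dotProduct_comm]
  simpa [PiLp.inner_apply, dotProduct, RCLike.inner_apply, starRingEnd_apply, ev] using h

lemma ev_mulVec {M : Matrix (Fin V) (Fin V) ℝ} (hM : M.IsHermitian) (i : Fin V) :
    M *ᵥ ev hM i = hM.eigenvalues i • ev hM i := hM.mulVec_eigenvectorBasis i

lemma ev_li {M : Matrix (Fin V) (Fin V) ℝ} (hM : M.IsHermitian) :
    LinearIndependent ℝ (ev hM) := by
  rw [Fintype.linearIndependent_iff]
  intro g hg j
  have h := congrArg (fun x => ev hM j ⬝ᵥ x) hg
  simpa [dot_sum, dotProduct_smul, ev_dot, Finset.sum_ite_eq] using h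

lemma ev_span {M : Matrix (Fin V) (Fin V) ℝ} (hM : M.IsHermitian) :
    Submodule.span ℝ (Set.range (ev hM)) = ⊤ :=
  (ev_li hM).span_eq_top_of_card_eq_finrank' (by simp)

lemma ev_decomp {M : Matrix (Fin V) (Fin V) ℝ} (hM : M.IsHermitian) (x : Fin V → ℝ) :
    ∑ i, (ev hM i ⬝ᵥ x) • ev hM i = x := by
  let L : (Fin V → ℝ) →ₗ[ℝ] (Fin V → ℝ) :=
    ∑ i, (dotL (ev hM i)).smulRight (ev hM i)
  have hL : ∀ y, L y = ∑ i, (ev hM i ⬝ᵥ y) • ev hM i := by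
    intro y; simp [L, LinearMap.sum_apply]
  have : L = LinearMap.id := by
    apply LinearMap.ext_on (ev_span hM)
    rintro x ⟨j, rfl⟩
    rw [hL]
    simp [ev_dot, ite_smul]
  rw [← hL, this, LinearMap.id_apply]



lemma dot_self_eq {M : Matrix (Fin V) (Fin V) ℝ} (hM : M.IsHermitian) (x : Fin V → ℝ) :
    x ⬝ᵥ x = ∑ i, (ev hM i ⬝ᵥ x) ^ 2 := by
  have h := ev_decomp hM x
  nth_rewrite 1 [← h]
  rw [sum_dot]
  refine Finset.sum_congr rfl fun i _ => ?_
  rw [smul_dotProduct]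
  simp [smul_eq_mul, sq]

lemma quad_eq {M : Matrix (Fin V) (Fin V) ℝ} (hM : M.IsHermitian) (x : Fin V → ℝ) :
    x ⬝ᵥ (M *ᵥ x) = ∑ i, hM.eigenvalues i * (ev hM i ⬝ᵥ x) ^ 2 := by
  have h := ev_decomp hM x
  have h2 : M *ᵥ x = ∑ i, (ev hM i ⬝ᵥ x) • (hM.eigenvalues i • ev hM i) := by
    conv_lhs => rw [← h]
    rw [← Matrix.mulVecLin_apply, map_sum]
    exact Finset.sum_congr rfl fun i _ => by
      rw [LinearMap.map_smul, Matrix.mulVecLin_apply, ev_mulVec]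
  rw [h2, dot_sum]
  refine Finset.sum_congr rfl fun i _ => ?_
  rw [dotProduct_smul, dotProduct_smul, dotProduct_comm x (ev hM i)]
  simp only [smul_eq_mul]
  ring

lemma exists_dot_ne_zero {M : Matrix (Fin V) (Fin V) ℝ} (hM : M.IsHermitian) {x : Fin V → ℝ}
    (hx : x ≠ 0) : ∃ i, ev hM i ⬝ᵥ x ≠ 0 := by
  by_contra h
  push_neg at h
  apply hx
  rw [← ev_decomp hM x]
  simp [h]

lemma span_ev_finrank {M : Matrix (Fin V) (Fin V) ℝ} (hM : M.IsHermitian) (s : Finset (Fin V)) :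
    Module.finrank ℝ ↥(Submodule.span ℝ (ev hM '' ↑s)) = s.card := by
  have h : ev hM '' ↑s = Set.range (fun i : ↥(↑s : Set (Fin V)) => ev hM ↑i) :=
    Set.image_eq_range _ _
  have hli : LinearIndependent ℝ (fun i : ↥(↑s : Set (Fin V)) => ev hM ↑i) :=
    (ev_li hM).comp _ Subtype.val_injective
  rw [h, finrank_span_eq_card hli]
  simp

lemma dot_eq_zero_of_mem_span {M : Matrix (Fin V) (Fin V) ℝ} (hM : M.IsHermitian)
    (s : Finset (Fin V)) {x : Fin V → ℝ}
    (hx : x ∈ Submodule.span ℝ (ev hM '' ↑s)) {i : Fin V} (hi : i ∉ s) :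
    ev hM i ⬝ᵥ x = 0 := by
  induction hx using Submodule.span_induction with
  | mem y hy =>
      obtain ⟨j, hj, rfl⟩ := hy
      rw [ev_dot, if_neg]
      rintro rfl
      exact hi hj
  | zero => simp
  | add y z _ _ hy hz => simp [dotProduct_add, hy, hz]
  | smul a y _ hy => simp [dotProduct_smul, hy]

lemma quad_lt_of_mem_span {M : Matrix (Fin V) (Fin V) ℝ} (hM : M.IsHermitian) (t : ℝ)
    {x : Fin V → ℝ}
    (hx : x ∈ Submodule.span ℝ (ev hM '' ↑(Finset.univ.filter fun i => hM.eigenvalues i < t)))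
    (hx0 : x ≠ 0) : x ⬝ᵥ (M *ᵥ x) < t * (x ⬝ᵥ x) := by
  rw [quad_eq hM, dot_self_eq hM x, Finset.mul_sum]
  apply Finset.sum_lt_sum
  · intro i _
    by_cases hi : hM.eigenvalues i < t
    · nlinarith [sq_nonneg (ev hM i ⬝ᵥ x)]
    · rw [dot_eq_zero_of_mem_span hM _ hx (by simp [hi])]
      simp
  · obtain ⟨i, hi⟩ := exists_dot_ne_zero hM hx0
    have hit : hM.eigenvalues i < t := by
      by_contra h
      exact hi (dot_eq_zero_of_mem_span hM _ hx (by simp [h]))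
    have hpos : 0 < (ev hM i ⬝ᵥ x) ^ 2 :=
      lt_of_le_of_ne (sq_nonneg _) (Ne.symm (pow_ne_zero 2 hi))
    exact ⟨i, Finset.mem_univ i, by nlinarith⟩

lemma quad_gt_of_mem_span {M : Matrix (Fin V) (Fin V) ℝ} (hM : M.IsHermitian) (t : ℝ)
    {x : Fin V → ℝ}
    (hx : x ∈ Submodule.span ℝ (ev hM '' ↑(Finset.univ.filter fun i => t < hM.eigenvalues i)))
    (hx0 : x ≠ 0) : t * (x ⬝ᵥ x) < x ⬝ᵥ (M *ᵥ x) := by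
  rw [quad_eq hM, dot_self_eq hM x, Finset.mul_sum]
  apply Finset.sum_lt_sum
  · intro i _
    by_cases hi : t < hM.eigenvalues i
    · nlinarith [sq_nonneg (ev hM i ⬝ᵥ x)]
    · rw [dot_eq_zero_of_mem_span hM _ hx (by simp [hi])]
      simp
  · obtain ⟨i, hi⟩ := exists_dot_ne_zero hM hx0
    have hit : t < hM.eigenvalues i := by
      by_contra h
      exact hi (dot_eq_zero_of_mem_span hM _ hx (by simp [h]))
    have hpos : 0 < (ev hM i ⬝ᵥ x) ^ 2 :=
      lt_of_le_of_ne (sq_nonneg _) (Ne.symm (pow_ne_zero 2 hi))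
    exact ⟨i, Finset.mem_univ i, by nlinarith⟩

lemma count_ge_of_quad_lt {M : Matrix (Fin V) (Fin V) ℝ} (hM : M.IsHermitian) (t : ℝ)
    (W : Submodule ℝ (Fin V → ℝ))
    (hW : ∀ x ∈ W, x ≠ 0 → x ⬝ᵥ (M *ᵥ x) < t * (x ⬝ᵥ x)) :
    Module.finrank ℝ ↥W ≤ (Finset.univ.filter fun i => hM.eigenvalues i < t).card := by
  by_contra hcon
  push_neg at hcon
  set s := Finset.univ.filter (fun i => ¬ hM.eigenvalues i < t) with hs
  set N := Submodule.span ℝ (ev hM '' ↑s) with hN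
  have hNrank : Module.finrank ℝ ↥N = s.card := span_ev_finrank hM s
  have hcard : (Finset.univ.filter fun i => hM.eigenvalues i < t).card + s.card = V := by
    rw [hs, Finset.card_filter_add_card_filter_not]
    simp
  have h1 := Submodule.finrank_sup_add_finrank_inf_eq N W
  have h2 : Module.finrank ℝ ↥(N ⊔ W) ≤ V :=
    le_trans (Submodule.finrank_le _) (by simp)
  have hk : 0 < Module.finrank ℝ ↥(N ⊓ W) := by omega
  have hbot : N ⊓ W ≠ ⊥ := by
    intro h
    rw [h] at hk
    simp [finrank_bot] at hk
  obtain ⟨x, hx, hx0⟩ := Submodule.exists_mem_ne_zero_of_ne_bot hbot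
  obtain ⟨hxN, hxW⟩ := Submodule.mem_inf.mp hx
  have hge : t * (x ⬝ᵥ x) ≤ x ⬝ᵥ (M *ᵥ x) := by
    rw [quad_eq hM, dot_self_eq hM x, Finset.mul_sum]
    apply Finset.sum_le_sum
    intro i _
    by_cases hi : hM.eigenvalues i < t
    · rw [dot_eq_zero_of_mem_span hM s hxN (by simp [hs, hi])]
      simp
    · nlinarith [sq_nonneg (ev hM i ⬝ᵥ x), not_lt.mp hi]
  exact absurd (hW x hxW hx0) (not_lt.mpr hge)

lemma count_ge_of_quad_gt {M : Matrix (Fin V) (Fin V) ℝ} (hM : M.IsHermitian) (t : ℝ)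
    (W : Submodule ℝ (Fin V → ℝ))
    (hW : ∀ x ∈ W, x ≠ 0 → t * (x ⬝ᵥ x) < x ⬝ᵥ (M *ᵥ x)) :
    Module.finrank ℝ ↥W ≤ (Finset.univ.filter fun i => t < hM.eigenvalues i).card := by
  by_contra hcon
  push_neg at hcon
  set s := Finset.univ.filter (fun i => ¬ t < hM.eigenvalues i) with hs
  set N := Submodule.span ℝ (ev hM '' ↑s) with hN
  have hNrank : Module.finrank ℝ ↥N = s.card := span_ev_finrank hM s
  have hcard : (Finset.univ.filter fun i => t < hM.eigenvalues i).card + s.card = V := by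
    rw [hs, Finset.card_filter_add_card_filter_not]
    simp
  have h1 := Submodule.finrank_sup_add_finrank_inf_eq N W
  have h2 : Module.finrank ℝ ↥(N ⊔ W) ≤ V :=
    le_trans (Submodule.finrank_le _) (by simp)
  have hk : 0 < Module.finrank ℝ ↥(N ⊓ W) := by omega
  have hbot : N ⊓ W ≠ ⊥ := by
    intro h
    rw [h] at hk
    simp [finrank_bot] at hk
  obtain ⟨x, hx, hx0⟩ := Submodule.exists_mem_ne_zero_of_ne_bot hbot
  obtain ⟨hxN, hxW⟩ := Submodule.mem_inf.mp hx
  have hge : x ⬝ᵥ (M *ᵥ x) ≤ t * (x ⬝ᵥ x) := by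
    rw [quad_eq hM, dot_self_eq hM x, Finset.mul_sum]
    apply Finset.sum_le_sum
    intro i _
    by_cases hi : t < hM.eigenvalues i
    · rw [dot_eq_zero_of_mem_span hM s hxN (by simp [hs, hi])]
      simp
    · nlinarith [sq_nonneg (ev hM i ⬝ᵥ x), not_lt.mp hi]
  exact absurd (hW x hxW hx0) (not_lt.mpr hge)



lemma card_filter_perm (σ : Equiv.Perm (Fin V)) (p : Fin V → Prop) [DecidablePred p] :
    (Finset.univ.filter fun i => p (σ i)).card = (Finset.univ.filter p).card :=
  Finset.card_equiv σ (by intro i; simp)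

lemma card_partition (e : Fin V → ℝ) (c : ℝ) :
    (Finset.univ.filter fun i => e i < c).card + (Finset.univ.filter fun i => e i = c).card
      + (Finset.univ.filter fun i => c < e i).card = V := by
  have h1 := Finset.card_filter_add_card_filter_not
    (s := (Finset.univ : Finset (Fin V))) (p := fun i => e i < c)
  have h2 : Finset.univ.filter (fun i => ¬ e i < c)
      = Finset.univ.filter (fun i => e i = c) ∪ Finset.univ.filter (fun i => c < e i) := by
    ext i
    simp only [Finset.mem_filter, Finset.mem_union, Finset.mem_univ, true_and, not_lt]
    constructor
    · intro h
      rcases eq_or_lt_of_le h with h' | h'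
      · exact Or.inl h'.symm
      · exact Or.inr h'
    · rintro (h | h)
      · exact le_of_eq h.symm
      · exact le_of_lt h
  have h3 : Disjoint (Finset.univ.filter (fun i => e i = c))
      (Finset.univ.filter (fun i => c < e i)) := by
    rw [Finset.disjoint_filter]
    intro i _ h1 h2
    exact absurd h1 (ne_of_gt h2)
  rw [h2, Finset.card_union_of_disjoint h3] at h1
  rw [Finset.card_univ, Fintype.card_fin] at h1
  omega

lemma sorted_filter_lt_card {e : Fin V → ℝ} (he : Monotone e) (n : Fin V)
    (hu : ∀ k, e k = e n → k = n) :
    (Finset.univ.filter fun i => e i < e n).card = n := by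
  have h : (Finset.univ.filter fun i => e i < e n) = Finset.Iio n := by
    ext i
    simp only [Finset.mem_filter, Finset.mem_univ, true_and, Finset.mem_Iio]
    constructor
    · intro h
      by_contra hn
      push_neg at hn
      exact absurd (he hn) (not_le.mpr h)
    · intro h
      rcases lt_or_eq_of_le (he h.le) with h' | h'
      · exact h'
      · exact absurd (hu i h') (ne_of_lt h)
  rw [h, Fin.card_Iio]

lemma sorted_filter_eq_singleton {e : Fin V → ℝ} (n : Fin V)
    (hu : ∀ k, e k = e n → k = n) :
    (Finset.univ.filter fun i => e i = e n) = {n} := by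
  ext i
  simp only [Finset.mem_filter, Finset.mem_univ, true_and, Finset.mem_singleton]
  exact ⟨fun h => hu i h, fun h => by rw [h]⟩

lemma sorted_at_count {e : Fin V → ℝ} (he : Monotone e) {c : ℝ} {p : Fin V} (hp : e p = c)
    (m : Fin V) (hm : (m : ℕ) = (Finset.univ.filter fun i => e i < c).card) : e m = c := by
  have hsub1 : (Finset.univ.filter fun i => e i < c) ⊆ Finset.Iio p := by
    intro i hi
    simp only [Finset.mem_filter, Finset.mem_univ, true_and] at hi
    simp only [Finset.mem_Iio]
    by_contra h
    push_neg at h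
    exact absurd (hp ▸ he h) (not_le.mpr hi)
  have h1 : (m : ℕ) ≤ (p : ℕ) := by
    rw [hm]
    simpa [Fin.card_Iio] using Finset.card_le_card hsub1
  have hle : e m ≤ c := hp ▸ he h1
  rcases eq_or_lt_of_le hle with h | h
  · exact h
  · exfalso
    have hsub2 : Finset.Iic m ⊆ (Finset.univ.filter fun i => e i < c) := by
      intro i hi
      simp only [Finset.mem_Iic] at hi
      simp only [Finset.mem_filter, Finset.mem_univ, true_and]
      exact lt_of_le_of_lt (he hi) h
    have h2 := Finset.card_le_card hsub2
    rw [Fin.card_Iic, ← hm] at h2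
    omega

lemma finrank_inf_add_card_ge {ι : Type*} [DecidableEq ι] (S : Finset ι)
    (φ : ι → ((Fin V → ℝ) →ₗ[ℝ] ℝ)) :
    V ≤ Module.finrank ℝ ↥(S.inf fun p => LinearMap.ker (φ p)) + S.card := by
  induction S using Finset.induction with
  | empty =>
      rw [Finset.inf_empty]
      simp [Finset.inf_empty, finrank_top]
  | @insert a s ha ih =>
      rw [Finset.inf_insert, Finset.card_insert_of_notMem ha]
      have h1 := Submodule.finrank_sup_add_finrank_inf_eq
        (LinearMap.ker (φ a)) (s.inf fun p => LinearMap.ker (φ p))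
      have h2 : Module.finrank ℝ ↥(LinearMap.ker (φ a) ⊔ s.inf fun p => LinearMap.ker (φ p))
          ≤ V := le_trans (Submodule.finrank_le _) (by simp)
      have h3 : V ≤ Module.finrank ℝ ↥(LinearMap.ker (φ a)) + 1 := by
        have h4 := LinearMap.finrank_range_add_finrank_ker (φ a)
        have h5 : Module.finrank ℝ ↥(LinearMap.range (φ a)) ≤ 1 :=
          le_trans (Submodule.finrank_le _) (by simp)
        have h6 : Module.finrank ℝ (Fin V → ℝ) = V := by simp
        omega
      omega

lemma vecMulVec_mulVec' (w v x : Fin V → ℝ) :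
    vecMulVec w v *ᵥ x = (v ⬝ᵥ x) • w := by
  ext a
  simp only [mulVec, dotProduct, vecMulVec_apply, Pi.smul_apply, smul_eq_mul]
  rw [Finset.sum_mul]
  exact Finset.sum_congr rfl fun b _ => by ring





lemma Bmat_eq_vecMulVec (i j : Fin V) (hij : i ≠ j) (α : ℝ) (hα : α ≠ 0) :
    Bmat i j α = vecMulVec (fun a => if a = i then 1 else if a = j then -(1/α) else 0)
      (fun b => if b = i then -α else if b = j then 1 else 0) := by
  ext a b
  simp only [Bmat, Matrix.of_apply, vecMulVec_apply]
  by_cases hai : a = i <;> by_cases haj : a = j <;> by_cases hbi : b = i <;> by_cases hbj : b = j <;>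
    simp_all <;> field_simp

lemma ifvec_dot (i j : Fin V) (hij : i ≠ j) (c : ℝ) (x : Fin V → ℝ) :
    (fun b => if b = i then c else if b = j then 1 else 0) ⬝ᵥ x = c * x i + x j := by
  have h : ∀ b, (if b = i then c else if b = j then (1:ℝ) else 0) * x b
      = (if b = i then c * x i else 0) + (if b = j then x j else 0) := by
    intro b
    by_cases hb1 : b = i <;> by_cases hb2 : b = j <;> simp_all
  rw [dotProduct]
  simp only [h]
  rw [Finset.sum_add_distrib]
  simp [Finset.sum_ite_eq']

lemma herm_transpose {M : Matrix (Fin V) (Fin V) ℝ} (hM : M.IsHermitian) : Mᵀ = M := by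
  ext a b
  simpa using congrFun (congrFun hM a) b

lemma ev_dot_mulVec {M : Matrix (Fin V) (Fin V) ℝ} (hM : M.IsHermitian) (i : Fin V)
    (x : Fin V → ℝ) :
    (⇑(hM.eigenvectorBasis i) : Fin V → ℝ) ⬝ᵥ (M *ᵥ x)
      = hM.eigenvalues i * ((⇑(hM.eigenvectorBasis i) : Fin V → ℝ) ⬝ᵥ x) := by
  rw [Matrix.dotProduct_mulVec, ← Matrix.mulVec_transpose, herm_transpose hM,
    hM.mulVec_eigenvectorBasis, smul_dotProduct]
  simp

lemma eig_mem {M : Matrix (Fin V) (Fin V) ℝ} (hM : M.IsHermitian) {x : Fin V → ℝ}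
    (hx : x ≠ 0) {t : ℝ} (h : M *ᵥ x = t • x) : ∃ i, hM.eigenvalues i = t := by
  obtain ⟨i, hi⟩ := exists_dot_ne_zero hM hx
  refine ⟨i, ?_⟩
  have h2 := congrArg (fun y => (⇑(hM.eigenvectorBasis i) : Fin V → ℝ) ⬝ᵥ y) h
  simp only at h2
  rw [ev_dot_mulVec hM i x, dotProduct_smul, smul_eq_mul] at h2
  exact mul_right_cancel₀ hi h2

end Stmt9Aux

/-- Let `G'` be a connected factor of `G` obtained by deleting a set `S` of
`k ≤ β(G)` edges, and let `f⁽ⁿ⁾` be a non-degenerate eigenvector of `H(G)` for `λ_n(G)`. With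
`α^c_e = f_j/f_i` for every removed edge `e = (i,j)`, `i < j`, the vector `f⁽ⁿ⁾` is an
eigenvector of `H(G';α^c) = H(G) + Σ_{e ∈ S} B(e;α^c_e)` with eigenvalue `λ_n(G)`, and this
eigenvalue occupies a position `m` in the spectrum of `H(G';α^c)` with `|n - m| ≤ k`.
(Eigenvalue positions are indexed from `0` here.) -/
theorem stmt_9 {V : ℕ} (G : SimpleGraph (Fin V)) (hG : G.Connected) (q : Fin V → ℝ)
    (S : Finset (Fin V × Fin V))
    (hSadj : ∀ p ∈ S, G.Adj p.1 p.2) (hSlt : ∀ p ∈ S, p.1 < p.2)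
    (hk : (S.card : ℤ) ≤ betti G)
    (hconn : (G.deleteEdges ↑(S.image fun p => s(p.1, p.2))).Connected)
    (f : Fin V → ℝ) (n : Fin V)
    (heig : Ham G q *ᵥ f = sortedEigs (Ham_isHermitian G q) n • f)
    (hnz : ∀ v, f v ≠ 0)
    (hsimple : ∀ k : Fin V,
      sortedEigs (Ham_isHermitian G q) k = sortedEigs (Ham_isHermitian G q) n → k = n) :
    (Ham G q + ∑ p ∈ S, Bmat p.1 p.2 (f p.2 / f p.1)) *ᵥ f
        = sortedEigs (Ham_isHermitian G q) n • f ∧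
    ∃ m : Fin V,
      sortedEigs ((Ham_isHermitian G q).add
          (sum_Bmat_isHermitian S fun p => f p.2 / f p.1)) m
        = sortedEigs (Ham_isHermitian G q) n ∧
      ((n : ℤ) - (m : ℤ)).natAbs ≤ S.card := by

  classical
  -- part 1: f is an eigenvector of the perturbed Hamiltonian
  have hne : ∀ p ∈ S, p.1 ≠ p.2 := fun p hp => ne_of_lt (hSlt p hp)
  have hαne : ∀ p : Fin V × Fin V, f p.2 / f p.1 ≠ 0 :=
    fun p => div_ne_zero (hnz p.2) (hnz p.1)
  have hBvv : ∀ p ∈ S, Bmat p.1 p.2 (f p.2 / f p.1)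
      = vecMulVec (fun a => if a = p.1 then 1 else if a = p.2 then -(1/(f p.2 / f p.1)) else 0)
        (fun b => if b = p.1 then -(f p.2 / f p.1) else if b = p.2 then 1 else 0) :=
    fun p hp => Stmt9Aux.Bmat_eq_vecMulVec p.1 p.2 (hne p hp) _ (hαne p)
  have hwdot : ∀ p : Fin V × Fin V, p.1 ≠ p.2 → ∀ x : Fin V → ℝ,
      (fun b => if b = p.1 then -(f p.2 / f p.1) else if b = p.2 then 1 else 0) ⬝ᵥ x
        = -(f p.2 / f p.1) * x p.1 + x p.2 :=
    fun p hp x => Stmt9Aux.ifvec_dot p.1 p.2 hp _ x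
  have hwf : ∀ p ∈ S,
      (fun b => if b = p.1 then -(f p.2 / f p.1) else if b = p.2 then 1 else 0) ⬝ᵥ f = 0 := by
    intro p hp
    rw [hwdot p (hne p hp) f, neg_mul, div_mul_cancel₀ _ (hnz p.1)]
    ring
  have hsum0 : (∑ p ∈ S, Bmat p.1 p.2 (f p.2 / f p.1)) *ᵥ f = 0 := by
    rw [Stmt9Aux.sum_mulVec]
    exact Finset.sum_eq_zero fun p hp => by
      rw [hBvv p hp, Stmt9Aux.vecMulVec_mulVec', hwf p hp, zero_smul]
  have part1 : (Ham G q + ∑ p ∈ S, Bmat p.1 p.2 (f p.2 / f p.1)) *ᵥ f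
      = sortedEigs (Ham_isHermitian G q) n • f := by
    rw [add_mulVec, hsum0, add_zero, heig]
  refine ⟨part1, ?_⟩
  -- notation
  have hH : (Ham G q).IsHermitian := Ham_isHermitian G q
  have hH' : (Ham G q + ∑ p ∈ S, Bmat p.1 p.2 (f p.2 / f p.1)).IsHermitian :=
    (Ham_isHermitian G q).add (sum_Bmat_isHermitian S fun p => f p.2 / f p.1)
  have he : Monotone (sortedEigs hH) := Tuple.monotone_sort _
  have he' : Monotone (sortedEigs hH') := Tuple.monotone_sort _
  -- the kernel subspace K
  have hK := Stmt9Aux.finrank_inf_add_card_ge S (fun p =>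
    Stmt9Aux.dotL (fun b => if b = p.1 then -(f p.2 / f p.1) else if b = p.2 then 1 else 0))
  set K := S.inf (fun p => LinearMap.ker (Stmt9Aux.dotL
    (fun b => if b = p.1 then -(f p.2 / f p.1) else if b = p.2 then 1 else 0))) with hKdef
  have hH'x : ∀ x ∈ K, (Ham G q + ∑ p ∈ S, Bmat p.1 p.2 (f p.2 / f p.1)) *ᵥ x
      = Ham G q *ᵥ x := by
    intro x hx
    rw [add_mulVec, Stmt9Aux.sum_mulVec]
    have hz : ∀ p ∈ S, Bmat p.1 p.2 (f p.2 / f p.1) *ᵥ x = 0 := by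
      intro p hp
      have h0 : (fun b => if b = p.1 then -(f p.2 / f p.1) else if b = p.2 then 1 else 0) ⬝ᵥ x
          = 0 := by
        have hm := Submodule.mem_finsetInf.mp hx p hp
        simpa [LinearMap.mem_ker] using hm
      rw [hBvv p hp, Stmt9Aux.vecMulVec_mulVec', h0, zero_smul]
    rw [Finset.sum_eq_zero hz, add_zero]
  -- counting for H
  have ha1 : (Finset.univ.filter fun i =>
        sortedEigs hH i < sortedEigs (Ham_isHermitian G q) n).card = (n : ℕ) :=
    Stmt9Aux.sorted_filter_lt_card he n hsimple
  have ha2 : (Finset.univ.filter fun i =>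
        sortedEigs hH i = sortedEigs (Ham_isHermitian G q) n) = {n} :=
    Stmt9Aux.sorted_filter_eq_singleton n hsimple
  have ha3 := Stmt9Aux.card_partition (sortedEigs hH) (sortedEigs (Ham_isHermitian G q) n)
  have ht1 : (Finset.univ.filter fun i =>
        sortedEigs hH i < sortedEigs (Ham_isHermitian G q) n).card
      = (Finset.univ.filter fun i =>
        hH.eigenvalues i < sortedEigs (Ham_isHermitian G q) n).card :=
    Stmt9Aux.card_filter_perm (Tuple.sort hH.eigenvalues)
      (fun i => hH.eigenvalues i < sortedEigs (Ham_isHermitian G q) n)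
  have ht2 : (Finset.univ.filter fun i =>
        sortedEigs hH i = sortedEigs (Ham_isHermitian G q) n).card
      = (Finset.univ.filter fun i =>
        hH.eigenvalues i = sortedEigs (Ham_isHermitian G q) n).card :=
    Stmt9Aux.card_filter_perm (Tuple.sort hH.eigenvalues)
      (fun i => hH.eigenvalues i = sortedEigs (Ham_isHermitian G q) n)
  have ht3 : (Finset.univ.filter fun i =>
        sortedEigs (Ham_isHermitian G q) n < sortedEigs hH i).card
      = (Finset.univ.filter fun i =>
        sortedEigs (Ham_isHermitian G q) n < hH.eigenvalues i).card :=
    Stmt9Aux.card_filter_perm (Tuple.sort hH.eigenvalues)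
      (fun i => sortedEigs (Ham_isHermitian G q) n < hH.eigenvalues i)
  -- the two test subspaces
  have r1 := Stmt9Aux.span_ev_finrank hH
    (Finset.univ.filter fun i => hH.eigenvalues i < sortedEigs (Ham_isHermitian G q) n)
  have r2 := Stmt9Aux.span_ev_finrank hH
    (Finset.univ.filter fun i => sortedEigs (Ham_isHermitian G q) n < hH.eigenvalues i)
  set sp1 := Submodule.span ℝ (Stmt9Aux.ev hH ''
    ↑(Finset.univ.filter fun i => hH.eigenvalues i < sortedEigs (Ham_isHermitian G q) n))
    with hsp1def
  set sp2 := Submodule.span ℝ (Stmt9Aux.ev hH ''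
    ↑(Finset.univ.filter fun i => sortedEigs (Ham_isHermitian G q) n < hH.eigenvalues i))
    with hsp2def
  have s1 := Submodule.finrank_sup_add_finrank_inf_eq K sp1
  have s2 : Module.finrank ℝ ↥(K ⊔ sp1) ≤ V := le_trans (Submodule.finrank_le _) (by simp)
  have s1' := Submodule.finrank_sup_add_finrank_inf_eq K sp2
  have s2' : Module.finrank ℝ ↥(K ⊔ sp2) ≤ V := le_trans (Submodule.finrank_le _) (by simp)
  have c1 : Module.finrank ℝ ↥(K ⊓ sp1) ≤ (Finset.univ.filter fun i =>
      hH'.eigenvalues i < sortedEigs (Ham_isHermitian G q) n).card := by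
    apply Stmt9Aux.count_ge_of_quad_lt hH'
    intro x hx hx0
    obtain ⟨hxK, hxsp⟩ := Submodule.mem_inf.mp hx
    rw [hH'x x hxK]
    exact Stmt9Aux.quad_lt_of_mem_span hH _ hxsp hx0
  have c2 : Module.finrank ℝ ↥(K ⊓ sp2) ≤ (Finset.univ.filter fun i =>
      sortedEigs (Ham_isHermitian G q) n < hH'.eigenvalues i).card := by
    apply Stmt9Aux.count_ge_of_quad_gt hH'
    intro x hx hx0
    obtain ⟨hxK, hxsp⟩ := Submodule.mem_inf.mp hx
    rw [hH'x x hxK]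
    exact Stmt9Aux.quad_gt_of_mem_span hH _ hxsp hx0
  -- counting for H'
  have hf0 : f ≠ 0 := fun h => hnz n (by rw [h]; rfl)
  obtain ⟨i0, hi0⟩ := Stmt9Aux.eig_mem hH' hf0 part1
  have hpart' := Stmt9Aux.card_partition hH'.eigenvalues (sortedEigs (Ham_isHermitian G q) n)
  have hge1 : 1 ≤ (Finset.univ.filter fun i =>
      hH'.eigenvalues i = sortedEigs (Ham_isHermitian G q) n).card :=
    Finset.card_pos.mpr ⟨i0, Finset.mem_filter.mpr ⟨Finset.mem_univ _, hi0⟩⟩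
  have ht1' : (Finset.univ.filter fun i =>
        sortedEigs hH' i < sortedEigs (Ham_isHermitian G q) n).card
      = (Finset.univ.filter fun i =>
        hH'.eigenvalues i < sortedEigs (Ham_isHermitian G q) n).card :=
    Stmt9Aux.card_filter_perm (Tuple.sort hH'.eigenvalues)
      (fun i => hH'.eigenvalues i < sortedEigs (Ham_isHermitian G q) n)
  have hdV : (Finset.univ.filter fun i =>
      sortedEigs hH' i < sortedEigs (Ham_isHermitian G q) n).card < V := by omega
  refine ⟨⟨_, hdV⟩, ?_, ?_⟩
  · have hp : sortedEigs hH' ((Tuple.sort hH'.eigenvalues)⁻¹ i0)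
        = sortedEigs (Ham_isHermitian G q) n := by
      show hH'.eigenvalues (Tuple.sort hH'.eigenvalues ((Tuple.sort hH'.eigenvalues)⁻¹ i0)) = _
      rw [← Equiv.Perm.mul_apply, mul_inv_cancel, Equiv.Perm.one_apply]
      exact hi0
    exact Stmt9Aux.sorted_at_count he' hp _ rfl
  · have ha2c : (Finset.univ.filter fun i =>
        sortedEigs hH i = sortedEigs (Ham_isHermitian G q) n).card = 1 := by
      rw [ha2, Finset.card_singleton]
    have hval : ((⟨(Finset.univ.filter fun i =>
        sortedEigs hH' i < sortedEigs (Ham_isHermitian G q) n).card, hdV⟩ : Fin V) : ℕ)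
        = (Finset.univ.filter fun i =>
        sortedEigs hH' i < sortedEigs (Ham_isHermitian G q) n).card := rfl
    omega
end

section
/- Let f^{(n)} be a non-degenerate eigenvector of H(G) corresponding to λ_n(G), and let ν_n, ℓ_n denote the number of nodal domains and the number of constant-sign cycles of f^{(n)}. Then n − (β(G) − ℓ_n) ≤ ν_n ≤ n. -/
open Matrix

/-- The spanning subgraph of `G` retaining exactly the edges `(a,b)` with `f a * f b > 0`.
Its connected components are the nodal domains of `f`. -/
def posSub {V : ℕ} (G : SimpleGraph (Fin V)) (f : Fin V → ℝ) : SimpleGraph (Fin V) where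
  Adj a b := G.Adj a b ∧ 0 < f a * f b
  symm := ⟨fun a b h => ⟨h.1.symm, by rw [mul_comm]; exact h.2⟩⟩
  loopless := ⟨fun a h => G.irrefl h.1⟩

/-- `ν(G;f)`: the number of nodal domains of `f` on `G`. -/
noncomputable def nodalCount {V : ℕ} (G : SimpleGraph (Fin V)) (f : Fin V → ℝ) : ℕ :=
  Nat.card (posSub G f).ConnectedComponent

/-- `φ(G;f)`: the number of edges of `G` along which `f` changes sign. -/
noncomputable def flipCount {V : ℕ} (G : SimpleGraph (Fin V)) (f : Fin V → ℝ) : ℕ :=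
  {e ∈ G.edgeSet | ∃ a b, e = s(a, b) ∧ f a * f b < 0}.ncard

/-- The number of vertices of the connected component `c` of the graph `H`. -/
noncomputable def compVerts {V : ℕ} (H : SimpleGraph (Fin V)) (c : H.ConnectedComponent) : ℕ :=
  Nat.card {v : Fin V // H.connectedComponentMk v = c}

/-- The number of edges of the connected component `c` of the graph `H`. -/
noncomputable def compEdges {V : ℕ} (H : SimpleGraph (Fin V)) (c : H.ConnectedComponent) : ℕ :=
  {e ∈ H.edgeSet | ∀ v ∈ e, H.connectedComponentMk v = c}.ncard

/-- `ℓ(G;f)`: the sum over the nodal domains of `f` of their first Betti numbers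
`E_k - V_k + 1`, i.e. the number of independent cycles on which `f` has constant sign. -/
noncomputable def cycleCount {V : ℕ} (G : SimpleGraph (Fin V)) (f : Fin V → ℝ) : ℕ :=
  ∑ᶠ c : (posSub G f).ConnectedComponent,
    (compEdges (posSub G f) c + 1 - compVerts (posSub G f) c)

section AuxLemmas
open Finset

noncomputable instance {V : ℕ} (H : SimpleGraph (Fin V)) : Fintype H.ConnectedComponent :=
  Fintype.ofFinite _

lemma key_identity {V : ℕ} (M : Matrix (Fin V) (Fin V) ℝ) (hM : ∀ a b, M a b = M b a)
    (f u : Fin V → ℝ) (hf : M *ᵥ f = 0) :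
    (fun v => u v * f v) ⬝ᵥ (M *ᵥ fun v => u v * f v)
      = -(1/2) * ∑ a, ∑ b, M a b * (f a * f b) * (u a - u b)^2 := by
  have hrow : ∀ a, ∑ b, M a b * f b = 0 := by
    intro a
    have := congrFun hf a
    simpa [Matrix.mulVec, dotProduct] using this
  have expand : ∀ a b, M a b * (f a * f b) * (u a - u b)^2
      = (f a * u a^2) * (M a b * f b) + (f b * u b^2) * (M b a * f a)
        - 2 * ((u a * f a) * (M a b * (u b * f b))) := by
    intro a b; rw [hM a b]; ring
  have T1 : ∑ a, ∑ b, (f a * u a^2) * (M a b * f b) = 0 := by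
    refine Finset.sum_eq_zero fun a _ => ?_
    rw [← Finset.mul_sum, hrow, mul_zero]
  have T2 : ∑ a : Fin V, ∑ b, (f b * u b^2) * (M b a * f a) = 0 := by
    rw [Finset.sum_comm]
    refine Finset.sum_eq_zero fun b _ => ?_
    rw [← Finset.mul_sum, hrow, mul_zero]
  have T3 : ∑ a, ∑ b, ((u a * f a) * (M a b * (u b * f b)))
      = (fun v => u v * f v) ⬝ᵥ (M *ᵥ fun v => u v * f v) := by
    simp [dotProduct, Matrix.mulVec, Finset.mul_sum]
  have main : ∑ a, ∑ b, M a b * (f a * f b) * (u a - u b)^2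
      = (∑ a, ∑ b, (f a * u a^2) * (M a b * f b)) + (∑ a : Fin V, ∑ b, (f b * u b^2) * (M b a * f a))
        - 2 * ∑ a, ∑ b, ((u a * f a) * (M a b * (u b * f b))) := by
    simp only [expand, Finset.sum_add_distrib, Finset.sum_sub_distrib, ← Finset.mul_sum]
  rw [main, T1, T2, T3]; ring

lemma dot_sum_left {V : ℕ} {ι : Type*} (s : Finset ι) (v : ι → Fin V → ℝ) (w : Fin V → ℝ) :
    (∑ i ∈ s, v i) ⬝ᵥ w = ∑ i ∈ s, v i ⬝ᵥ w := by
  simp only [dotProduct, Finset.sum_apply, Finset.sum_mul]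
  rw [Finset.sum_comm]

lemma dot_sum_right {V : ℕ} {ι : Type*} (s : Finset ι) (w : Fin V → ℝ) (v : ι → Fin V → ℝ) :
    w ⬝ᵥ (∑ i ∈ s, v i) = ∑ i ∈ s, w ⬝ᵥ v i := by
  simp only [dotProduct, Finset.sum_apply, Finset.mul_sum]
  rw [Finset.sum_comm]

section spectral
variable {V : ℕ} {M : Matrix (Fin V) (Fin V) ℝ} (hM : M.IsHermitian)

lemma eigBasis_dot (k l : Fin V) :
    ⇑(hM.eigenvectorBasis k) ⬝ᵥ ⇑(hM.eigenvectorBasis l) = if k = l then 1 else 0 := by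
  have := orthonormal_iff_ite.mp hM.eigenvectorBasis.orthonormal k l
  rw [← this]
  simp [PiLp.inner_apply, dotProduct, RCLike.inner_apply, mul_comm]

lemma quad_eval (s : Finset (Fin V)) (c : Fin V → ℝ) :
    (∑ k ∈ s, c k • ⇑(hM.eigenvectorBasis k)) ⬝ᵥ (M *ᵥ ∑ k ∈ s, c k • ⇑(hM.eigenvectorBasis k))
      = ∑ k ∈ s, (c k)^2 * hM.eigenvalues k := by
  have hmv : M *ᵥ (∑ k ∈ s, c k • ⇑(hM.eigenvectorBasis k))
      = ∑ k ∈ s, (c k * hM.eigenvalues k) • ⇑(hM.eigenvectorBasis k) := by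
    rw [← Matrix.mulVecLin_apply, map_sum]
    refine Finset.sum_congr rfl fun k _ => ?_
    rw [_root_.map_smul, Matrix.mulVecLin_apply, hM.mulVec_eigenvectorBasis, smul_smul]
  rw [hmv, dot_sum_left]
  refine Finset.sum_congr rfl fun k hk => ?_
  rw [dot_sum_right, Finset.sum_eq_single k]
  · rw [smul_dotProduct, dotProduct_smul, eigBasis_dot, if_pos rfl]
    simp only [smul_eq_mul]; ring
  · intro l hl hlk
    rw [smul_dotProduct, dotProduct_smul, eigBasis_dot, if_neg (Ne.symm hlk)]
    simp
  · intro h; exact absurd hk h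
lemma dot_eval (s : Finset (Fin V)) (c : Fin V → ℝ) :
    (∑ k ∈ s, c k • ⇑(hM.eigenvectorBasis k)) ⬝ᵥ (∑ k ∈ s, c k • ⇑(hM.eigenvectorBasis k))
      = ∑ k ∈ s, (c k)^2 := by
  rw [dot_sum_left]
  refine Finset.sum_congr rfl fun k hk => ?_
  rw [dot_sum_right, Finset.sum_eq_single k]
  · rw [smul_dotProduct, dotProduct_smul, eigBasis_dot, if_pos rfl]
    simp [pow_two]
  · intro l hl hlk
    rw [smul_dotProduct, dotProduct_smul, eigBasis_dot, if_neg (Ne.symm hlk)]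
    simp
  · intro h; exact absurd hk h
end spectral

section spectral2
variable {V : ℕ} {M : Matrix (Fin V) (Fin V) ℝ} (hM : M.IsHermitian)

lemma eigBasis_linIndep (s : Finset (Fin V)) :
    LinearIndependent ℝ (fun k : {k // k ∈ s} => ⇑(hM.eigenvectorBasis k.1)) := by
  rw [Fintype.linearIndependent_iff]
  intro g hg l
  have h0 := congrArg (fun y => y ⬝ᵥ ⇑(hM.eigenvectorBasis l.1)) hg
  simp only [dot_sum_left, smul_dotProduct, eigBasis_dot, zero_dotProduct] at h0
  rw [Finset.sum_eq_single l] at h0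
  · simpa using h0
  · intro k _ hkl
    rw [if_neg (fun h => hkl (Subtype.ext h)), smul_zero]
  · intro h; exact absurd (Finset.mem_univ l) h

lemma eigSpan_finrank (s : Finset (Fin V)) :
    Module.finrank ℝ (Submodule.span ℝ
      (Set.range fun k : {k // k ∈ s} => ⇑(hM.eigenvectorBasis k.1))) = s.card := by
  rw [finrank_span_eq_card (eigBasis_linIndep hM s), Fintype.card_coe]

lemma eigSpan_repr (s : Finset (Fin V)) (x : Fin V → ℝ)
    (hx : x ∈ Submodule.span ℝ (Set.range fun k : {k // k ∈ s} => ⇑(hM.eigenvectorBasis k.1))) :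
    ∃ c : Fin V → ℝ, x = ∑ k ∈ s, c k • ⇑(hM.eigenvectorBasis k) ∧ (x ≠ 0 → ∃ k ∈ s, c k ≠ 0) := by
  classical
  obtain ⟨g, hg⟩ := Submodule.mem_span_range_iff_exists_fun ℝ |>.mp hx
  refine ⟨fun k => if h : k ∈ s then g ⟨k, h⟩ else 0, ?_, ?_⟩
  · rw [← hg, ← Finset.sum_coe_sort s (fun k => (if h : k ∈ s then g ⟨k, h⟩ else 0) • ⇑(hM.eigenvectorBasis k))]
    refine Finset.sum_congr rfl fun k _ => ?_
    rw [dif_pos k.2]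
  · intro hx0
    by_contra hc
    push_neg at hc
    apply hx0
    rw [← hg]
    refine Finset.sum_eq_zero fun k _ => ?_
    have := hc k.1 k.2
    rw [dif_pos k.2] at this
    rw [this, zero_smul]

lemma quad_neg_on_span (s : Finset (Fin V)) (lam : ℝ)
    (hlt : ∀ k ∈ s, hM.eigenvalues k < lam) (x : Fin V → ℝ)
    (hx : x ∈ Submodule.span ℝ (Set.range fun k : {k // k ∈ s} => ⇑(hM.eigenvectorBasis k.1)))
    (hx0 : x ≠ 0) : x ⬝ᵥ (M *ᵥ x) - lam * (x ⬝ᵥ x) < 0 := by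
  obtain ⟨c, hrepr, hne⟩ := eigSpan_repr hM s x hx
  obtain ⟨k₀, hk₀s, hk₀⟩ := hne hx0
  rw [hrepr, quad_eval, dot_eval, Finset.mul_sum, ← Finset.sum_sub_distrib]
  have : ∀ k ∈ s, (c k)^2 * hM.eigenvalues k - lam * (c k)^2
      = (c k)^2 * (hM.eigenvalues k - lam) := fun k _ => by ring
  rw [Finset.sum_congr rfl this]
  have hend : ∑ k ∈ s, (c k)^2 * (hM.eigenvalues k - lam) < ∑ k ∈ s, (0:ℝ) := by
    refine Finset.sum_lt_sum (fun k hk => ?_) ⟨k₀, hk₀s, ?_⟩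
    · exact mul_nonpos_of_nonneg_of_nonpos (sq_nonneg _) (by linarith [hlt k hk])
    · have h1 : 0 < (c k₀)^2 := by positivity
      have h2 : hM.eigenvalues k₀ - lam < 0 := by linarith [hlt k₀ hk₀s]
      exact mul_neg_of_pos_of_neg h1 h2
  simpa using hend

lemma quad_pos_on_span (s : Finset (Fin V)) (lam : ℝ)
    (hlt : ∀ k ∈ s, lam < hM.eigenvalues k) (x : Fin V → ℝ)
    (hx : x ∈ Submodule.span ℝ (Set.range fun k : {k // k ∈ s} => ⇑(hM.eigenvectorBasis k.1)))
    (hx0 : x ≠ 0) : 0 < x ⬝ᵥ (M *ᵥ x) - lam * (x ⬝ᵥ x) := by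
  obtain ⟨c, hrepr, hne⟩ := eigSpan_repr hM s x hx
  obtain ⟨k₀, hk₀s, hk₀⟩ := hne hx0
  rw [hrepr, quad_eval, dot_eval, Finset.mul_sum, ← Finset.sum_sub_distrib]
  have : ∀ k ∈ s, (c k)^2 * hM.eigenvalues k - lam * (c k)^2
      = (c k)^2 * (hM.eigenvalues k - lam) := fun k _ => by ring
  rw [Finset.sum_congr rfl this]
  have hend : ∑ k ∈ s, (0:ℝ) < ∑ k ∈ s, (c k)^2 * (hM.eigenvalues k - lam) := by
    refine Finset.sum_lt_sum (fun k hk => ?_) ⟨k₀, hk₀s, ?_⟩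
    · exact mul_nonneg (sq_nonneg _) (by linarith [hlt k hk])
    · have h1 : 0 < (c k₀)^2 := by positivity
      have h2 : 0 < hM.eigenvalues k₀ - lam := by linarith [hlt k₀ hk₀s]
      exact mul_pos h1 h2
  simpa using hend

end spectral2
lemma card_filter_comp_perm {V : ℕ} (σ : Equiv.Perm (Fin V)) (p : Fin V → Prop)
    [DecidablePred p] :
    (Finset.univ.filter fun k => p (σ k)).card = (Finset.univ.filter p).card := by
  refine Finset.card_bij (fun k _ => σ k) ?_ ?_ ?_
  · intro k hk; simp only [Finset.mem_filter, Finset.mem_univ, true_and] at hk ⊢; exact hk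
  · intro a ha b hb h; exact σ.injective h
  · intro e he
    simp only [Finset.mem_filter, Finset.mem_univ, true_and] at he
    exact ⟨σ.symm e, by simp [he], by simp⟩

lemma eig_counts {V : ℕ} {M : Matrix (Fin V) (Fin V) ℝ} (hM : M.IsHermitian) (n : Fin V)
    (hsimple : ∀ k, sortedEigs hM k = sortedEigs hM n → k = n) :
    (Finset.univ.filter fun k => hM.eigenvalues k < sortedEigs hM n).card = (n : ℕ) ∧
    (Finset.univ.filter fun k => sortedEigs hM n < hM.eigenvalues k).card = V - 1 - (n : ℕ) := by
  classical
  have mono : Monotone (sortedEigs hM) := Tuple.monotone_sort hM.eigenvalues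
  set lam := sortedEigs hM n with hlam
  have hlt : ∀ k, sortedEigs hM k < lam ↔ k < n := by
    intro k
    constructor
    · intro h
      by_contra hn
      push_neg at hn
      exact absurd (mono hn) (not_le_of_gt h)
    · intro h
      rcases lt_or_eq_of_le (mono h.le) with h' | h'
      · exact h'
      · exact absurd (hsimple k h') (ne_of_lt h)
  have hgt : ∀ k, lam < sortedEigs hM k ↔ n < k := by
    intro k
    constructor
    · intro h
      by_contra hn
      push_neg at hn
      exact absurd (mono hn) (not_le_of_gt h)
    · intro h
      rcases lt_or_eq_of_le (mono h.le) with h' | h'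
      · exact h'
      · exact absurd (hsimple k h'.symm) (ne_of_gt h)
  constructor
  · rw [← card_filter_comp_perm (Tuple.sort hM.eigenvalues)
      (fun k => hM.eigenvalues k < lam)]
    have : (Finset.univ.filter fun k => hM.eigenvalues (Tuple.sort hM.eigenvalues k) < lam)
        = Finset.Iio n := by
      ext k
      simp only [Finset.mem_filter, Finset.mem_univ, true_and, Finset.mem_Iio]
      exact hlt k
    rw [this, Fin.card_Iio]
  · rw [← card_filter_comp_perm (Tuple.sort hM.eigenvalues)
      (fun k => lam < hM.eigenvalues k)]
    have : (Finset.univ.filter fun k => lam < hM.eigenvalues (Tuple.sort hM.eigenvalues k))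
        = Finset.Ioi n := by
      ext k
      simp only [Finset.mem_filter, Finset.mem_univ, true_and, Finset.mem_Ioi]
      exact hgt k
    rw [this, Fin.card_Ioi]
section graph
variable {V : ℕ} (H : SimpleGraph (Fin V))

open Classical in
lemma compVerts_eq_card (c : H.ConnectedComponent) :
    compVerts H c = (Finset.univ.filter fun v => H.connectedComponentMk v = c).card := by
  rw [compVerts, Nat.card_eq_fintype_card, Fintype.card_subtype]

open Classical in
lemma compEdges_eq_card (c : H.ConnectedComponent) :
    compEdges H c = (Finset.univ.filter fun e : Sym2 (Fin V) =>
      e ∈ H.edgeSet ∧ ∀ v ∈ e, H.connectedComponentMk v = c).card := by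
  rw [compEdges, ← Set.ncard_coe_finset]
  congr 1
  ext e
  simp [Set.mem_setOf_eq]

open Classical in
lemma sum_compVerts : ∑ c : H.ConnectedComponent, compVerts H c = V := by
  have := Finset.card_eq_sum_card_fiberwise
    (f := fun v : Fin V => H.connectedComponentMk v) (s := Finset.univ) (t := Finset.univ)
    (fun v _ => Finset.mem_univ _)
  simp only [Finset.card_univ, Fintype.card_fin] at this
  rw [Finset.sum_congr rfl (fun c _ => (compVerts_eq_card H c).symm)] at this
  exact this.symm

open Classical in
lemma sum_compEdges : ∑ c : H.ConnectedComponent, compEdges H c = H.edgeSet.ncard := by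
  have hns : H.edgeSet.ncard = (Finset.univ.filter fun e : Sym2 (Fin V) => e ∈ H.edgeSet).card := by
    rw [← Set.ncard_coe_finset]; congr 1; ext e; simp
  rw [hns]
  have := Finset.card_eq_sum_card_fiberwise
    (f := fun e : Sym2 (Fin V) => H.connectedComponentMk (Quot.out e).1)
    (s := Finset.univ.filter fun e : Sym2 (Fin V) => e ∈ H.edgeSet) (t := Finset.univ)
    (fun v _ => Finset.mem_univ _)
  rw [this]
  refine Finset.sum_congr rfl fun c _ => ?_
  rw [compEdges_eq_card]
  congr 1
  ext e
  simp only [Finset.mem_filter, Finset.mem_univ, true_and, and_assoc]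
  have hout : e = s(e.out.1, e.out.2) := by
    exact (Quot.out_eq e).symm
  have hswap : (e ∈ H.edgeSet ∧ ∀ v ∈ e, H.connectedComponentMk v = c) ↔
      (e ∈ H.edgeSet ∧ H.connectedComponentMk (Quot.out e).1 = c) := by
    constructor
    · rintro ⟨he, hall⟩
      exact ⟨he, hall _ (Sym2.out_fst_mem e)⟩
    · rintro ⟨he, hc⟩
      refine ⟨he, fun v hv => ?_⟩
      have hadj : H.Adj e.out.1 e.out.2 := by
        rw [← SimpleGraph.mem_edgeSet, ← hout]; exact he
      rw [hout] at hv
      rcases Sym2.mem_iff.mp hv with h | h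
      · rw [h]; exact hc
      · rw [h, ← SimpleGraph.ConnectedComponent.connectedComponentMk_eq_of_adj hadj]; exact hc
  exact hswap

end graph

section graph2
variable {V : ℕ} (H : SimpleGraph (Fin V))

lemma exists_adj_dist_lt {r v : Fin V} (hreach : H.Reachable v r) (hne : v ≠ r) :
    ∃ w, H.Adj v w ∧ H.dist w r < H.dist v r := by
  obtain ⟨p, hp⟩ := hreach.exists_walk_length_eq_dist
  cases p with
  | nil => exact absurd rfl hne
  | @cons _ w _ h q =>
      refine ⟨w, h, ?_⟩
      have h1 : H.dist w r ≤ q.length := SimpleGraph.dist_le q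
      have h2 : q.length + 1 = H.dist v r := by
        simpa [SimpleGraph.Walk.length_cons] using hp
      omega

open Classical in
lemma compVerts_le_compEdges (c : H.ConnectedComponent) :
    compVerts H c ≤ compEdges H c + 1 := by
  obtain ⟨r, hr⟩ := c.exists_rep
  -- the "parent" map
  have aux : ∀ v : Fin V, H.Reachable v r ∧ v ≠ r →
      ∃ w, H.Adj v w ∧ H.dist w r < H.dist v r := fun v hv => exists_adj_dist_lt H hv.1 hv.2
  set pr : Fin V → Fin V := fun v =>
    if h : H.Reachable v r ∧ v ≠ r then Classical.choose (aux v h) else v with hpr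
  have prSpec : ∀ v, H.Reachable v r → v ≠ r →
      H.Adj v (pr v) ∧ H.dist (pr v) r < H.dist v r := by
    intro v h1 h2
    rw [hpr]; simp only [dif_pos (And.intro h1 h2)]
    exact Classical.choose_spec (aux v ⟨h1, h2⟩)
  set A := Finset.univ.filter fun v => H.connectedComponentMk v = c ∧ v ≠ r with hA
  set B := Finset.univ.filter (fun e : Sym2 (Fin V) =>
      e ∈ H.edgeSet ∧ ∀ v ∈ e, H.connectedComponentMk v = c) with hB
  have hreachA : ∀ v ∈ A, H.Reachable v r ∧ v ≠ r := by
    intro v hv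
    rw [hA, Finset.mem_filter] at hv
    exact ⟨SimpleGraph.ConnectedComponent.exact (hv.2.1.trans hr.symm), hv.2.2⟩
  have hcard : A.card ≤ B.card := by
    refine Finset.card_le_card_of_injOn (fun v => s(v, pr v)) ?_ ?_
    · intro v hv
      obtain ⟨h1, h2⟩ := hreachA v hv
      obtain ⟨hadj, _⟩ := prSpec v h1 h2
      rw [hB, Finset.mem_coe, Finset.mem_filter]
      refine ⟨Finset.mem_univ _, hadj, fun x hx => ?_⟩
      have hvc : H.connectedComponentMk v = c := by
        rw [hA, Finset.mem_coe, Finset.mem_filter] at hv; exact hv.2.1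
      rcases Sym2.mem_iff.mp hx with h | h
      · rw [h]; exact hvc
      · rw [h, ← SimpleGraph.ConnectedComponent.connectedComponentMk_eq_of_adj hadj]; exact hvc
    · intro v hv v' hv' heq
      obtain ⟨h1, h2⟩ := hreachA v hv
      obtain ⟨h1', h2'⟩ := hreachA v' hv'
      obtain ⟨_, hd⟩ := prSpec v h1 h2
      obtain ⟨_, hd'⟩ := prSpec v' h1' h2'
      rcases Sym2.eq_iff.mp heq with ⟨h, _⟩ | ⟨ha, hb⟩
      · exact h
      · exfalso; rw [← ha] at hd'; rw [hb] at hd; omega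
  have hsplit : (Finset.univ.filter fun v => H.connectedComponentMk v = c)
      = insert r A := by
    ext v
    rw [hA]
    simp only [Finset.mem_filter, Finset.mem_univ, true_and, Finset.mem_insert]
    constructor
    · intro h
      by_cases hv : v = r
      · exact Or.inl hv
      · exact Or.inr (by simp [h, hv])
    · rintro (h | h)
      · rw [h]; exact hr
      · exact h.1
  have hrA : r ∉ A := by rw [hA]; simp
  rw [compVerts_eq_card, compEdges_eq_card, hsplit, Finset.card_insert_of_notMem hrA]
  rw [hB] at hcard
  omega

end graph2

section comp
variable {V : ℕ} (P : SimpleGraph (Fin V)) (f : Fin V → ℝ)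

open Classical in
noncomputable def gfam (c : P.ConnectedComponent) : Fin V → ℝ :=
  fun v => if P.connectedComponentMk v = c then f v else 0

lemma gfam_linIndep (hnz : ∀ v, f v ≠ 0) : LinearIndependent ℝ (gfam P f) := by
  rw [Fintype.linearIndependent_iff]
  intro t ht c
  obtain ⟨r, hr0⟩ := c.exists_rep
  have hr : P.connectedComponentMk r = c := hr0
  have := congrFun ht r
  classical
  simp only [Finset.sum_apply, Pi.smul_apply, gfam, smul_eq_mul, Pi.zero_apply] at this
  rw [Finset.sum_eq_single c] at this
  · rw [if_pos hr] at this
    rcases mul_eq_zero.mp this with h | h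
    · exact h
    · exact absurd h (hnz r)
  · intro b _ hbc
    rw [if_neg (fun h => hbc (h.symm.trans hr)), mul_zero]
  · intro h; exact absurd (Finset.mem_univ c) h

lemma gfam_span_repr (x : Fin V → ℝ)
    (hx : x ∈ Submodule.span ℝ (Set.range (gfam P f))) :
    ∃ u : Fin V → ℝ, (∀ v, x v = u v * f v) ∧
      (∀ a b, P.connectedComponentMk a = P.connectedComponentMk b → u a = u b) := by
  classical
  obtain ⟨t, ht⟩ := (Submodule.mem_span_range_iff_exists_fun ℝ).mp hx
  refine ⟨fun v => t (P.connectedComponentMk v), fun v => ?_, fun a b h => by simp [h]⟩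
  rw [← ht]
  simp only [Finset.sum_apply, Pi.smul_apply, gfam, smul_eq_mul]
  rw [Finset.sum_eq_single (P.connectedComponentMk v)]
  · rw [if_pos rfl]
  · intro b _ hbc
    rw [if_neg (fun h => hbc h.symm), mul_zero]
  · intro h; exact absurd (Finset.mem_univ _) h

end comp

end AuxLemmas

/-- For a non-degenerate eigenvector `f⁽ⁿ⁾` of `H(G)` (the `n`-th one,
`1`-based; here `n = (n₀ : ℕ) + 1` with `n₀ : Fin V` a `0`-based position):
`n - (β(G) - ℓ_n) ≤ ν_n ≤ n`. -/
theorem stmt_10 {V : ℕ} (G : SimpleGraph (Fin V)) (hG : G.Connected) (q : Fin V → ℝ)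
    (f : Fin V → ℝ) (n : Fin V)
    (heig : Ham G q *ᵥ f = sortedEigs (Ham_isHermitian G q) n • f)
    (hnz : ∀ v, f v ≠ 0)
    (hsimple : ∀ k : Fin V,
      sortedEigs (Ham_isHermitian G q) k = sortedEigs (Ham_isHermitian G q) n → k = n) :
    ((n : ℤ) + 1) - (betti G - (cycleCount G f : ℤ)) ≤ (nodalCount G f : ℤ) ∧
    nodalCount G f ≤ (n : ℕ) + 1 := by
  classical
  set lam := sortedEigs (Ham_isHermitian G q) n with hlam
  set P := posSub G f with hPdef
  set M : Matrix (Fin V) (Fin V) ℝ := Ham G q - lam • 1 with hMdef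
  have hsymH : ∀ a b, Ham G q a b = Ham G q b a := by
    intro a b
    have h := congrFun (congrFun (Ham_isHermitian G q) a) b
    simpa [Matrix.conjTranspose_apply] using h.symm
  have hMsym : ∀ a b, M a b = M b a := by
    intro a b
    simp only [hMdef, Matrix.sub_apply, Matrix.smul_apply, Matrix.one_apply, smul_eq_mul]
    rw [hsymH a b]
    by_cases h : a = b
    · subst h; rfl
    · rw [if_neg h, if_neg (Ne.symm h)]
  have hMf : M *ᵥ f = 0 := by
    rw [hMdef, Matrix.sub_mulVec, heig, Matrix.smul_mulVec, Matrix.one_mulVec, sub_self]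
  have hMoff : ∀ a b, a ≠ b → M a b = if G.Adj a b then -1 else 0 := by
    intro a b hab
    simp only [hMdef, Matrix.sub_apply, Matrix.smul_apply, Matrix.one_apply, smul_eq_mul,
      Ham, Matrix.of_apply, if_neg hab, mul_zero, sub_zero]
  have hQ : ∀ x : Fin V → ℝ, x ⬝ᵥ (M *ᵥ x) = x ⬝ᵥ (Ham G q *ᵥ x) - lam * (x ⬝ᵥ x) := by
    intro x
    rw [hMdef, Matrix.sub_mulVec, Matrix.smul_mulVec, Matrix.one_mulVec,
      dotProduct_sub, dotProduct_smul, smul_eq_mul]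
  obtain ⟨hcard_lt, hcard_gt⟩ := eig_counts (Ham_isHermitian G q) n hsimple
  rw [← hlam] at hcard_lt hcard_gt
  have hnodal : nodalCount G f = Fintype.card P.ConnectedComponent := by
    rw [nodalCount, ← hPdef, Nat.card_eq_fintype_card]
  -- ===================== upper bound =====================
  have hupper : nodalCount G f ≤ (n : ℕ) + 1 := by
    set splus := Finset.univ.filter
      (fun k => lam < (Ham_isHermitian G q).eigenvalues k) with hsplus
    set Wp := Submodule.span ℝ (Set.range fun k : {k // k ∈ splus} =>
      ⇑((Ham_isHermitian G q).eigenvectorBasis k.1)) with hWp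
    set S := Submodule.span ℝ (Set.range (gfam P f)) with hS
    have hSrank : Module.finrank ℝ S = Fintype.card P.ConnectedComponent :=
      finrank_span_eq_card (gfam_linIndep P f hnz)
    have hWrank : Module.finrank ℝ Wp = V - 1 - (n : ℕ) := by
      rw [hWp, eigSpan_finrank, ← hcard_gt, hsplus]
    have hQS : ∀ x ∈ S, x ⬝ᵥ (M *ᵥ x) ≤ 0 := by
      intro x hx
      obtain ⟨u, hxu, hucomp⟩ := gfam_span_repr P f x hx
      have hx' : x = fun v => u v * f v := funext hxu
      rw [hx', key_identity M hMsym f u hMf]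
      have hsum : 0 ≤ ∑ a, ∑ b, M a b * (f a * f b) * (u a - u b)^2 := by
        refine Finset.sum_nonneg fun a _ => Finset.sum_nonneg fun b _ => ?_
        by_cases hab : a = b
        · subst hab; simp
        by_cases hadj : G.Adj a b
        · rcases lt_trichotomy (f a * f b) 0 with hfab | hfab | hfab
          · rw [hMoff a b hab, if_pos hadj]; nlinarith [sq_nonneg (u a - u b)]
          · exact absurd hfab (mul_ne_zero (hnz a) (hnz b))
          · have hPadj : P.Adj a b := (show G.Adj a b ∧ 0 < f a * f b from ⟨hadj, hfab⟩)
            have huab : u a = u b := hucomp a b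
              (SimpleGraph.ConnectedComponent.connectedComponentMk_eq_of_adj hPadj)
            rw [huab]; simp
        · rw [hMoff a b hab, if_neg hadj]; simp
      linarith
    have hbot : S ⊓ Wp = ⊥ := by
      rw [Submodule.eq_bot_iff]
      intro x hx
      by_contra hx0
      have h1 : 0 < x ⬝ᵥ (Ham G q *ᵥ x) - lam * (x ⬝ᵥ x) :=
        quad_pos_on_span (Ham_isHermitian G q) splus lam
          (fun k hk => by simpa [hsplus] using (Finset.mem_filter.mp hk).2) x hx.2 hx0
      rw [← hQ] at h1
      exact absurd (hQS x hx.1) (not_le_of_gt h1)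
    have hdim : Module.finrank ℝ S + Module.finrank ℝ Wp ≤ V := by
      have h1 := Submodule.finrank_sup_add_finrank_inf_eq S Wp
      rw [hbot, finrank_bot, add_zero] at h1
      rw [← h1]
      have h2 := Submodule.finrank_le (S ⊔ Wp)
      rwa [Module.finrank_pi, Fintype.card_fin] at h2
    have hnV : (n : ℕ) < V := n.2
    rw [hnodal]
    omega
  -- ===================== lower bound: n ≤ flipCount =====================
  set cutPairs := Finset.univ.filter
    (fun p : Fin V × Fin V => p.1 < p.2 ∧ G.Adj p.1 p.2 ∧ f p.1 * f p.2 < 0) with hcut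
  have hFC : flipCount G f = (Finset.univ.filter (fun e : Sym2 (Fin V) =>
      e ∈ G.edgeSet ∧ ∃ a b, e = s(a, b) ∧ f a * f b < 0)).card := by
    rw [flipCount, ← Set.ncard_coe_finset]
    congr 1
    ext e
    simp [Set.mem_setOf_eq]
  have hflip : flipCount G f = cutPairs.card := by
    rw [hFC]
    symm
    refine Finset.card_bij (fun p _ => s(p.1, p.2)) ?_ ?_ ?_
    · intro p hp
      rw [hcut, Finset.mem_filter] at hp
      obtain ⟨-, hlt, hadj, hneg⟩ := hp
      simp only [Finset.mem_filter, Finset.mem_univ, true_and]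
      exact ⟨(SimpleGraph.mem_edgeSet G).mpr hadj, p.1, p.2, rfl, hneg⟩
    · intro p hp p' hp' heq
      rw [hcut, Finset.mem_filter] at hp hp'
      rcases Sym2.eq_iff.mp heq with ⟨h1, h2⟩ | ⟨h1, h2⟩
      · exact Prod.ext h1 h2
      · exfalso
        have := hp.2.1
        have := hp'.2.1
        omega
    · intro e he
      simp only [Finset.mem_filter, Finset.mem_univ, true_and] at he
      obtain ⟨hE, a, b, heq, hneg⟩ := he
      subst heq
      have hadj : G.Adj a b := (SimpleGraph.mem_edgeSet G).mp hE
      rcases lt_trichotomy a b with h | h | h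
      · have hmem : (a, b) ∈ cutPairs := by
          rw [hcut, Finset.mem_filter]; exact ⟨Finset.mem_univ _, h, hadj, hneg⟩
        exact ⟨(a, b), hmem, rfl⟩
      · exact absurd h hadj.ne
      · have hneg' : f b * f a < 0 := by rw [mul_comm] at hneg; exact hneg
        have hmem : (b, a) ∈ cutPairs := by
          rw [hcut, Finset.mem_filter]; exact ⟨Finset.mem_univ _, h, hadj.symm, hneg'⟩
        exact ⟨(b, a), hmem, Sym2.eq_swap⟩
  have hnle : (n : ℕ) ≤ cutPairs.card := by
    set sminus := Finset.univ.filter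
      (fun k => (Ham_isHermitian G q).eigenvalues k < lam) with hsminus
    set Wm := Submodule.span ℝ (Set.range fun k : {k // k ∈ sminus} =>
      ⇑((Ham_isHermitian G q).eigenvectorBasis k.1)) with hWm
    set Φ : (Fin V → ℝ) →ₗ[ℝ] ({p // p ∈ cutPairs} → ℝ) := LinearMap.pi
      (fun p => f p.1.2 • LinearMap.proj p.1.1 - f p.1.1 • LinearMap.proj p.1.2) with hPhi
    have hker : ∀ x ∈ LinearMap.ker Φ, ∀ a b, G.Adj a b → f a * f b < 0 →
        f b * x a = f a * x b := by
      intro x hx a b hadj hneg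
      have key : ∀ p, p ∈ cutPairs → f p.2 * x p.1 = f p.1 * x p.2 := by
        intro p hp
        have h0 := congrFun (LinearMap.mem_ker.mp hx) ⟨p, hp⟩
        simp only [hPhi, LinearMap.pi_apply, LinearMap.sub_apply, LinearMap.smul_apply,
          LinearMap.proj_apply, Pi.zero_apply, smul_eq_mul] at h0
        linarith [h0]
      rcases lt_trichotomy a b with h | h | h
      · have hmem : (a, b) ∈ cutPairs := by
          rw [hcut, Finset.mem_filter]; exact ⟨Finset.mem_univ _, h, hadj, hneg⟩
        exact key (a, b) hmem
      · exact absurd h hadj.ne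
      · have hneg2 : f b * f a < 0 := by rw [mul_comm] at hneg; exact hneg
        have hmem : (b, a) ∈ cutPairs := by
          rw [hcut, Finset.mem_filter]; exact ⟨Finset.mem_univ _, h, hadj.symm, hneg2⟩
        exact (key (b, a) hmem).symm
    have hbot : Wm ⊓ LinearMap.ker Φ = ⊥ := by
      rw [Submodule.eq_bot_iff]
      intro x hx
      by_contra hx0
      have hneg : x ⬝ᵥ (Ham G q *ᵥ x) - lam * (x ⬝ᵥ x) < 0 :=
        quad_neg_on_span (Ham_isHermitian G q) sminus lam
          (fun k hk => by simpa [hsminus] using (Finset.mem_filter.mp hk).2) x hx.1 hx0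
      rw [← hQ] at hneg
      set u : Fin V → ℝ := fun v => x v / f v with hu
      have hx' : x = fun v => u v * f v := funext fun v => by
        rw [hu]; exact (div_mul_cancel₀ (x v) (hnz v)).symm
      have hucond : ∀ a b, G.Adj a b → f a * f b < 0 → u a = u b := by
        intro a b hadj hneg'
        have h1 := hker x hx.2 a b hadj hneg'
        rw [hu]
        show x a / f a = x b / f b
        rw [div_eq_div_iff (hnz a) (hnz b)]
        linear_combination h1
      have hnonneg : 0 ≤ x ⬝ᵥ (M *ᵥ x) := by
        rw [hx', key_identity M hMsym f u hMf]
        have hsum : ∑ a, ∑ b, M a b * (f a * f b) * (u a - u b)^2 ≤ 0 := by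
          refine Finset.sum_nonpos fun a _ => Finset.sum_nonpos fun b _ => ?_
          by_cases hab : a = b
          · subst hab; simp
          by_cases hadj : G.Adj a b
          · rcases lt_trichotomy (f a * f b) 0 with hfab | hfab | hfab
            · rw [hucond a b hadj hfab]; simp
            · exact absurd hfab (mul_ne_zero (hnz a) (hnz b))
            · rw [hMoff a b hab, if_pos hadj]; nlinarith [sq_nonneg (u a - u b)]
          · rw [hMoff a b hab, if_neg hadj]; simp
        linarith
      linarith
    have e1 := LinearMap.finrank_range_add_finrank_ker Φ
    rw [Module.finrank_pi, Fintype.card_fin] at e1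
    have e2 : Module.finrank ℝ (LinearMap.range Φ) ≤ cutPairs.card := by
      have h2 := Submodule.finrank_le (LinearMap.range Φ)
      rwa [Module.finrank_pi, Fintype.card_coe] at h2
    have e3 : Module.finrank ℝ Wm + Module.finrank ℝ (LinearMap.ker Φ) ≤ V := by
      have h1 := Submodule.finrank_sup_add_finrank_inf_eq Wm (LinearMap.ker Φ)
      rw [hbot, finrank_bot, add_zero] at h1
      rw [← h1]
      have h2 := Submodule.finrank_le (Wm ⊔ LinearMap.ker Φ)
      rwa [Module.finrank_pi, Fintype.card_fin] at h2
    have e4 : Module.finrank ℝ Wm = (n : ℕ) := by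
      rw [hWm, eigSpan_finrank, ← hcard_lt, hsminus]
    omega
  -- ===================== counting identity =====================
  have hEsplit : G.edgeSet.ncard = P.edgeSet.ncard + flipCount G f := by
    have hGE : G.edgeSet.ncard
        = (Finset.univ.filter (fun e : Sym2 (Fin V) => e ∈ G.edgeSet)).card := by
      rw [← Set.ncard_coe_finset]; congr 1; ext e; simp
    have hPE : P.edgeSet.ncard
        = (Finset.univ.filter (fun e : Sym2 (Fin V) => e ∈ P.edgeSet)).card := by
      rw [← Set.ncard_coe_finset]; congr 1; ext e; simp
    have hpart : (Finset.univ.filter (fun e : Sym2 (Fin V) => e ∈ G.edgeSet))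
        = (Finset.univ.filter (fun e : Sym2 (Fin V) => e ∈ P.edgeSet))
          ∪ (Finset.univ.filter (fun e : Sym2 (Fin V) =>
              e ∈ G.edgeSet ∧ ∃ a b, e = s(a, b) ∧ f a * f b < 0)) := by
      ext e
      induction e using Sym2.ind with
      | _ a b =>
        simp only [Finset.mem_union, Finset.mem_filter, Finset.mem_univ, true_and,
          SimpleGraph.mem_edgeSet]
        constructor
        · intro hadj
          rcases lt_trichotomy (f a * f b) 0 with h | h | h
          · exact Or.inr ⟨hadj, a, b, rfl, h⟩
          · exact absurd h (mul_ne_zero (hnz a) (hnz b))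
          · exact Or.inl (show G.Adj a b ∧ 0 < f a * f b from ⟨hadj, h⟩)
        · rintro (h | h)
          · exact h.1
          · exact h.1
    have hdisj : Disjoint
        (Finset.univ.filter (fun e : Sym2 (Fin V) => e ∈ P.edgeSet))
        (Finset.univ.filter (fun e : Sym2 (Fin V) =>
          e ∈ G.edgeSet ∧ ∃ a b, e = s(a, b) ∧ f a * f b < 0)) := by
      rw [Finset.disjoint_left]
      intro e he1 he2
      simp only [Finset.mem_filter, Finset.mem_univ, true_and] at he1 he2
      obtain ⟨hGe, a, b, heq, hneg2⟩ := he2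
      subst heq
      have : (0:ℝ) < f a * f b := ((SimpleGraph.mem_edgeSet P).mp he1).2
      linarith
    rw [hGE, hPE, hFC, hpart, Finset.card_union_of_disjoint hdisj]
  have hcyc : (cycleCount G f : ℤ)
      = (P.edgeSet.ncard : ℤ) + (nodalCount G f : ℤ) - V := by
    rw [cycleCount, ← hPdef, finsum_eq_sum_of_fintype, Nat.cast_sum]
    have hterm : ∀ c : P.ConnectedComponent,
        ((compEdges P c + 1 - compVerts P c : ℕ) : ℤ)
          = (compEdges P c : ℤ) + 1 - (compVerts P c : ℤ) := by
      intro c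
      have := compVerts_le_compEdges P c
      omega
    rw [Finset.sum_congr rfl (fun c _ => hterm c), Finset.sum_sub_distrib,
      Finset.sum_add_distrib]
    have hE2 : ∑ c : P.ConnectedComponent, (compEdges P c : ℤ) = (P.edgeSet.ncard : ℤ) := by
      rw [← Nat.cast_sum, sum_compEdges]
    have hV2 : ∑ c : P.ConnectedComponent, (compVerts P c : ℤ) = (V : ℤ) := by
      rw [← Nat.cast_sum, sum_compVerts]
    rw [hE2, hV2, Finset.sum_const, Finset.card_univ, hnodal]
    push_cast
    ring
  -- ===================== conclusion =====================
  refine ⟨?_, hupper⟩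
  rw [betti]
  have c1 : (G.edgeSet.ncard : ℤ) = (P.edgeSet.ncard : ℤ) + (flipCount G f : ℤ) := by
    exact_mod_cast hEsplit
  have c2 : (n : ℤ) ≤ (flipCount G f : ℤ) := by
    rw [hflip]; exact_mod_cast hnle
  linarith [hcyc, c1, c2]
end

section
/- Let P be a ν-partition of G with set S of removed edges, let f ∈ ℝ^V satisfy f_i ≠ 0 for every endpoint i of an edge of S, and for each e = (i,j) ∈ S with i < j set α_e = f_j/f_i. Then B(e;α_e) f = 0 for every e ∈ S, and consequently f is an eigenvector of H(G) with eigenvalue λ if and only if f is an eigenvector of H(P;α) with eigenvalue λ. In particular, if the restriction of f to each component P_k is an eigenvector of the corresponding block H(P_k;α) with the same eigenvalue λ for all k, then H(G) f = λ f. -/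
open Matrix

open Classical in
/-- The restriction of `f : Fin V → ℝ` to the connected component `c` of the graph `H`,
extended by zero to the other components. -/
noncomputable def restrictComp {V : ℕ} (H : SimpleGraph (Fin V)) (c : H.ConnectedComponent)
    (f : Fin V → ℝ) : Fin V → ℝ :=
  fun v => if H.connectedComponentMk v = c then f v else 0

lemma Bmat_mulVec_apply {V : ℕ} (i j : Fin V) (hij : i ≠ j) (α : ℝ) (f : Fin V → ℝ)
    (a : Fin V) :
    (Bmat i j α *ᵥ f) a =
      (if a = i then -α * f i + f j else 0) + (if a = j then f i - (1/α) * f j else 0) := by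
  classical
  simp only [Bmat, Matrix.mulVec, dotProduct, Matrix.of_apply, add_mul, ite_mul,
    zero_mul, one_mul, Finset.sum_add_distrib]
  by_cases hai : a = i <;> by_cases haj : a = j <;>
    simp [hai, haj, hij, Ne.symm hij, Finset.sum_ite_eq', neg_mul, sub_eq_add_neg,
      div_eq_mul_inv, mul_comm] <;> ring

lemma sum_mulVec' {V : ℕ} {ι : Type*} (s : Finset ι) (M : ι → Matrix (Fin V) (Fin V) ℝ)
    (f : Fin V → ℝ) : (∑ i ∈ s, M i) *ᵥ f = ∑ i ∈ s, M i *ᵥ f := by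
  classical
  induction s using Finset.induction with
  | empty => simp [Matrix.zero_mulVec]
  | insert _ _ h ih => simp [Finset.sum_insert h, Matrix.add_mulVec, ih]

/-- Let `P` be a partition of `G` with removed edge set `S` (each removed
edge `(i,j)`, `i < j`, joins two distinct components of `P = G.deleteEdges S`), let `f` be
nonzero on all endpoints of removed edges, and set `α_e = f_j / f_i`. Then `B(e;α_e) f = 0`
for every `e ∈ S`; hence `f` is an eigenvector of `H(G)` with eigenvalue `λ` iff it is an
eigenvector of `H(P;α) = H(G) + Σ_e B(e;α_e)` with eigenvalue `λ`. In particular, if the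
restriction of `f` to each component `P_k` is an eigenvector of the corresponding block of
`H(P;α)` with one and the same eigenvalue `λ`, then `H(G) f = λ f`. -/
theorem stmt_13 {V : ℕ} (G : SimpleGraph (Fin V)) (hG : G.Connected) (q : Fin V → ℝ)
    (S : Finset (Fin V × Fin V))
    (hSadj : ∀ p ∈ S, G.Adj p.1 p.2) (hSlt : ∀ p ∈ S, p.1 < p.2)
    (P : SimpleGraph (Fin V)) (hPdef : P = G.deleteEdges ↑(S.image fun p => s(p.1, p.2)))
    (hpart : ∀ p ∈ S, ¬ P.Reachable p.1 p.2)
    (f : Fin V → ℝ) (hnz : ∀ p ∈ S, f p.1 ≠ 0 ∧ f p.2 ≠ 0) :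
    (∀ p ∈ S, Bmat p.1 p.2 (f p.2 / f p.1) *ᵥ f = 0) ∧
    (∀ lam : ℝ,
      Ham G q *ᵥ f = lam • f ↔
        (Ham G q + ∑ p ∈ S, Bmat p.1 p.2 (f p.2 / f p.1)) *ᵥ f = lam • f) ∧
    (∀ lam : ℝ,
      (∀ c : P.ConnectedComponent,
        restrictComp P c f ≠ 0 ∧
        (Ham G q + ∑ p ∈ S, Bmat p.1 p.2 (f p.2 / f p.1)) *ᵥ restrictComp P c f
          = lam • restrictComp P c f) →
      Ham G q *ᵥ f = lam • f) := by
  classical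
  have hB : ∀ p ∈ S, Bmat p.1 p.2 (f p.2 / f p.1) *ᵥ f = 0 := by
    intro p hp
    have hij : p.1 ≠ p.2 := (hSlt p hp).ne
    obtain ⟨h1, h2⟩ := hnz p hp
    funext a
    rw [Bmat_mulVec_apply p.1 p.2 hij]
    by_cases hai : a = p.1 <;> by_cases haj : a = p.2 <;>
      simp [hai, haj, hij, Ne.symm hij] <;> field_simp <;> ring
  have hsum : (∑ p ∈ S, Bmat p.1 p.2 (f p.2 / f p.1)) *ᵥ f = 0 := by
    rw [sum_mulVec']
    exact Finset.sum_eq_zero hB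
  have hiff : ∀ lam : ℝ,
      Ham G q *ᵥ f = lam • f ↔
        (Ham G q + ∑ p ∈ S, Bmat p.1 p.2 (f p.2 / f p.1)) *ᵥ f = lam • f := by
    intro lam
    rw [Matrix.add_mulVec, hsum, add_zero]
  refine ⟨hB, hiff, ?_⟩
  intro lam hc
  have : Fintype P.ConnectedComponent := Fintype.ofFinite _
  have hf : f = ∑ c : P.ConnectedComponent, restrictComp P c f := by
    funext v
    rw [Finset.sum_apply]
    simp [restrictComp]
  rw [hiff lam]
  set M := Ham G q + ∑ p ∈ S, Bmat p.1 p.2 (f p.2 / f p.1) with hM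
  rw [hf, ← Matrix.mulVecLin_apply, map_sum, Finset.smul_sum]
  refine Finset.sum_congr rfl fun c _ => ?_
  rw [Matrix.mulVecLin_apply]
  exact (hc c).2
end
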